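/- arXiv:0909.5311 — 6 statements merged into one kernel-verified Lean document; each statement's English description precedes it below -/
import Mathlib

section
/- Let G be a connected (simple, finite) graph such that all holes of G are pairwise edge-disjoint and G has exactly one non-edge maximal clique K. Then a cycle C in G is a hole if and only if C has at most 2 vertices in common with K. -/
open SimpleGraph

/-- A hole of a graph: a chordless (induced) cycle of length at least 4. -/
def SimpleGraph.IsHole {V : Type*} (G : SimpleGraph V) {v : V} (c : G.Walk v v) : Prop :=
  c.IsCycle ∧ 4 ≤ c.length ∧
    ∀ x y, x ∈ c.support → y ∈ c.support → G.Adj x y → s(x, y) ∈ c.edges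

/-- The set of edge sets of holes of `G`; its cardinality is the number of holes of `G`. -/
def SimpleGraph.holeEdgeSets {V : Type*} (G : SimpleGraph V) : Set (Set (Sym2 V)) :=
  {E | ∃ (v : V) (c : G.Walk v v), G.IsHole c ∧ E = {e | e ∈ c.edges}}

/-- All holes of `G` are pairwise edge-disjoint: two holes either have the same edge set
or share no edge. -/
def SimpleGraph.HolesEdgeDisjoint {V : Type*} (G : SimpleGraph V) : Prop :=
  ∀ ⦃u v : V⦄ (c₁ : G.Walk u u) (c₂ : G.Walk v v), G.IsHole c₁ → G.IsHole c₂ →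
    (∀ e, e ∈ c₁.edges ↔ e ∈ c₂.edges) ∨ (∀ e, e ∈ c₁.edges → e ∉ c₂.edges)

/-- A maximal clique of `G` (as a vertex set). -/
def SimpleGraph.IsMaxClique {V : Type*} (G : SimpleGraph V) (K : Set V) : Prop :=
  G.IsClique K ∧ ∀ K', G.IsClique K' → K ⊆ K' → K' = K

/-- A non-edge maximal clique: a maximal clique with at least 3 vertices. -/
def SimpleGraph.IsNonEdgeMaxClique {V : Type*} (G : SimpleGraph V) (K : Set V) : Prop :=
  G.IsMaxClique K ∧ 3 ≤ K.ncard

/-- The clique number of `G`. -/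
noncomputable def SimpleGraph.cliqueNumber {V : Type*} (G : SimpleGraph V) : ℕ :=
  sSup {n | ∃ s : Finset V, G.IsNClique n s}

/-- A `K`-avoiding path: a path which is not an edge of the clique `K` and
whose internal vertices all avoid `K`. -/
def SimpleGraph.IsKAvoidingPath {V : Type*} (G : SimpleGraph V) (K : Set V)
    {a b : V} (p : G.Walk a b) : Prop :=
  p.IsPath ∧ ¬(p.length = 1 ∧ a ∈ K ∧ b ∈ K) ∧
    ∀ w ∈ p.support, w = a ∨ w = b ∨ w ∉ K

/-- The competition graph of a digraph given by its arc relation `D`. -/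
def competitionGraph {V : Type*} (D : V → V → Prop) : SimpleGraph V where
  Adj x y := x ≠ y ∧ ∃ v, D x v ∧ D y v
  symm := by
    constructor
    rintro x y ⟨hxy, v, hx, hy⟩
    exact ⟨hxy.symm, v, hy, hx⟩
  loopless := by
    constructor
    rintro x ⟨hxx, -⟩
    exact hxx rfl

/-- A digraph is acyclic if it has no directed cycle. -/
def DigraphAcyclic {V : Type*} (D : V → V → Prop) : Prop :=
  ∀ x, ¬ Relation.TransGen D x x

/-- `G` together with `k` added isolated vertices. -/
def SimpleGraph.addIsolated {V : Type*} (G : SimpleGraph V) (k : ℕ) :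
    SimpleGraph (V ⊕ Fin k) where
  Adj a b := ∃ x y, G.Adj x y ∧ a = Sum.inl x ∧ b = Sum.inl y
  symm := by
    constructor
    rintro a b ⟨x, y, h, rfl, rfl⟩
    exact ⟨y, x, h.symm, rfl, rfl⟩
  loopless := by
    constructor
    rintro a ⟨x, y, h, rfl, hxy⟩
    exact h.ne (Sum.inl.inj hxy)

/-- The competition number of `G`: the least `k` such that `G` plus `k` isolated
vertices is the competition graph of an acyclic digraph. -/
noncomputable def competitionNumber {V : Type*} (G : SimpleGraph V) : ℕ :=
  sInf {k | ∃ D : (V ⊕ Fin k) → (V ⊕ Fin k) → Prop,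
    DigraphAcyclic D ∧ competitionGraph D = G.addIsolated k}

open SimpleGraph.Walk

section Aux
variable {V : Type*} {G : SimpleGraph V}

private lemma my_length_rotate [DecidableEq V] {v x : V} (c : G.Walk v v) (h : x ∈ c.support) :
    (c.rotate _ h).length = c.length := by
  have h1 := congrArg Walk.length (c.take_spec h)
  rw [length_append] at h1
  rw [Walk.rotate, length_append]
  omega

private lemma my_end_mem_tail {u : V} {c : G.Walk u u} (h : 0 < c.length) :
    u ∈ c.support.tail := by
  cases c with
  | nil => simp at h
  | cons h' p => simpa using p.end_mem_support

private lemma my_mem_support_iff_tail {u : V} {c : G.Walk u u} (h : 0 < c.length) (w : V) :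
    w ∈ c.support ↔ w ∈ c.support.tail := by
  constructor
  · intro hw
    rw [support_eq_cons] at hw
    rcases List.mem_cons.mp hw with rfl | hw
    · exact my_end_mem_tail h
    · exact hw
  · intro hw
    rw [support_eq_cons]
    exact List.mem_cons_of_mem _ hw

private lemma my_mem_support_rotate_iff [DecidableEq V] {v x : V} {c : G.Walk v v}
    (h : 0 < c.length) (hx : x ∈ c.support) (w : V) :
    w ∈ (c.rotate _ hx).support ↔ w ∈ c.support := by
  have h' : 0 < (c.rotate _ hx).length := by rwa [my_length_rotate]
  rw [my_mem_support_iff_tail h' w, my_mem_support_iff_tail h w]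
  exact (support_rotate c _ hx).mem_iff

/-- In a path, the edge out of the start determines the second vertex. -/
private lemma my_eq_cons_of_edge_start {u v w : V} {p : G.Walk u v} (hp : p.IsPath)
    (he : s(u, w) ∈ p.edges) :
    ∃ (h : G.Adj u w) (p' : G.Walk w v), p = Walk.cons h p' := by
  cases p with
  | nil => simp at he
  | cons h' p' =>
    rw [edges_cons, List.mem_cons] at he
    rcases he with he | he
    · rw [Sym2.eq_iff] at he
      rcases he with ⟨-, rfl⟩ | ⟨h1, h2⟩
      · exact ⟨h', p', rfl⟩
      · exact absurd h1 h'.ne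
    · exact absurd (p'.fst_mem_support_of_mem_edges he)
        ((cons_isPath_iff h' p').mp hp).2

private lemma my_loop_path_length {u : V} {p : G.Walk u u} (hp : p.IsPath) :
    p.length = 0 := by
  cases p with
  | nil => rfl
  | cons h' p' =>
    exact absurd p'.end_mem_support ((cons_isPath_iff h' p').mp hp).2

/-- A path containing the edge between its endpoints has length one. -/
private lemma my_path_length_one {u v : V} {p : G.Walk u v} (hp : p.IsPath)
    (he : s(u, v) ∈ p.edges) : p.length = 1 := by
  obtain ⟨h, p', rfl⟩ := my_eq_cons_of_edge_start hp he
  have := my_loop_path_length ((cons_isPath_iff h p').mp hp).1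
  simp [this]

private lemma my_edges_of_length_one {u v : V} {p : G.Walk u v} (h : p.length = 1) :
    p.edges = [s(u, v)] := by
  cases p with
  | nil => simp at h
  | cons h' p' =>
    have h0 : p'.length = 0 := by simpa using h
    have := Walk.eq_of_length_eq_zero h0
    subst this
    have : p'.edges = [] := List.length_eq_zero_iff.mp (by simp [length_edges, h0])
    simp [this]

private lemma my_walk_nonnil_length {u v : V} {p : G.Walk u v} (h : u ≠ v) : 0 < p.length := by
  rcases Nat.eq_zero_or_pos p.length with h0 | h0
  · exact absurd (Walk.eq_of_length_eq_zero h0) h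
  · exact h0

/-- Splitting a cycle at a vertex distinct from the base point gives two paths
with disjoint edges. -/
private lemma my_split_facts [DecidableEq V] {x y : V} {c : G.Walk x x} (hc : c.IsCycle)
    (hy : y ∈ c.support) (hne : y ≠ x) :
    (c.takeUntil y hy).IsPath ∧ (c.dropUntil y hy).IsPath ∧
      List.Disjoint (c.takeUntil y hy).edges (c.dropUntil y hy).edges ∧
      0 < (c.takeUntil y hy).length ∧ 0 < (c.dropUntil y hy).length := by
  set p := c.takeUntil y hy with hp
  set q := c.dropUntil y hy with hq
  have hspec : p.append q = c := c.take_spec hy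
  have hsupp : c.support = p.support ++ q.support.tail := by
    rw [← hspec, support_append]
  have hptail : p.support = x :: p.support.tail := p.support_eq_cons
  have htail : c.support.tail = p.support.tail ++ q.support.tail := by
    rw [hsupp, hptail]; rfl
  have hnodup := hc.support_nodup
  rw [htail, List.nodup_append] at hnodup
  obtain ⟨hnp, hnq, hdisj⟩ := hnodup
  have hxq : x ∈ q.support.tail := by
    have hx : x ∈ q.support := q.end_mem_support
    rw [q.support_eq_cons, List.mem_cons] at hx
    rcases hx with h | h
    · exact absurd h.symm hne
    · exact h
  have hyp : y ∈ p.support.tail := by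
    have hyy : y ∈ p.support := p.end_mem_support
    rw [hptail, List.mem_cons] at hyy
    rcases hyy with h | h
    · exact absurd h hne
    · exact h
  have hppath : p.IsPath := by
    apply Walk.IsPath.mk'
    rw [hptail, List.nodup_cons]
    exact ⟨fun hx => hdisj _ hx _ hxq rfl, hnp⟩
  have hqpath : q.IsPath := by
    apply Walk.IsPath.mk'
    rw [q.support_eq_cons, List.nodup_cons]
    exact ⟨fun hy' => hdisj _ hyp _ hy' rfl, hnq⟩
  have hedisj : List.Disjoint p.edges q.edges := by
    have : c.edges = p.edges ++ q.edges := by rw [← hspec, edges_append]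
    have hnd := hc.isTrail.edges_nodup
    rw [this, List.nodup_append] at hnd
    exact fun {a} ha hb => hnd.2.2 a ha a hb rfl
  exact ⟨hppath, hqpath, hedisj, my_walk_nonnil_length (Ne.symm hne),
    my_walk_nonnil_length hne⟩

private lemma my_exists_maxclique {V : Type*} [Fintype V] (G : SimpleGraph V) (s : Finset V)
    (hs : G.IsClique ↑s) : ∃ K', G.IsMaxClique K' ∧ ↑s ⊆ K' := by
  classical
  obtain ⟨t, ⟨ht1, ht2⟩, hmax⟩ := Set.Finite.exists_maximalFor id
    {t : Finset V | G.IsClique ↑t ∧ s ⊆ t} (Set.toFinite _) ⟨s, hs, Finset.Subset.refl s⟩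
  refine ⟨↑t, ⟨ht1, ?_⟩, by exact_mod_cast ht2⟩
  intro K' hK' hsub
  apply Set.Subset.antisymm _ hsub
  intro w hw
  have h1 : G.IsClique ↑(insert w t) := by
    rw [Finset.coe_insert]
    exact hK'.subset (Set.insert_subset hw hsub)
  have h2 : t = insert w t := le_antisymm (Finset.subset_insert _ _) (hmax
    ⟨h1, ht2.trans (Finset.subset_insert _ _)⟩ (Finset.subset_insert _ _))
  have : w ∈ t := h2 ▸ Finset.mem_insert_self w t
  exact this

private lemma my_triangle_subset {V : Type*} [Fintype V] {G : SimpleGraph V} {K : Set V}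
    (hK : G.IsNonEdgeMaxClique K) (huniq : ∀ K', G.IsNonEdgeMaxClique K' → K' = K)
    {x y z : V} (hxy : G.Adj x y) (hxz : G.Adj x z) (hyz : G.Adj y z) :
    ({x, y, z} : Set V) ⊆ K := by
  classical
  have hclique : G.IsClique ({x, y, z} : Set V) := by
    intro a ha b hb hab
    simp only [Set.mem_insert_iff, Set.mem_singleton_iff] at ha hb
    rcases ha with rfl | rfl | rfl <;> rcases hb with rfl | rfl | rfl <;>
      first
        | exact absurd rfl hab
        | assumption
        | exact hxy.symm
        | exact hxz.symm
        | exact hyz.symm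
  obtain ⟨K', hK', hsub⟩ := my_exists_maxclique G {x, y, z} (by
    simpa using hclique)
  have hsub' : ({x, y, z} : Set V) ⊆ K' := by
    intro a ha
    apply hsub
    simpa using ha
  have h3 : 3 ≤ K'.ncard := by
    have hcard : ({x, y, z} : Set V).ncard = 3 :=
      Set.ncard_eq_three.mpr ⟨x, y, z, hxy.ne, hxz.ne, hyz.ne, rfl⟩
    calc 3 = ({x, y, z} : Set V).ncard := hcard.symm
      _ ≤ K'.ncard := Set.ncard_le_ncard hsub' (Set.toFinite K')
  have := huniq K' ⟨hK', h3⟩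
  subst this
  exact hsub'

private lemma my_forward {V : Type*} [Fintype V] {G : SimpleGraph V} {K : Set V}
    (hK : G.IsNonEdgeMaxClique K) (huniq : ∀ K', G.IsNonEdgeMaxClique K' → K' = K)
    {v : V} {c : G.Walk v v} (hhole : G.IsHole c) :
    (K ∩ {x | x ∈ c.support}).ncard ≤ 2 := by
  classical
  by_contra hcard
  push_neg at hcard
  rw [Set.two_lt_ncard_iff (Set.toFinite _)] at hcard
  obtain ⟨x, y, z, hx, hy, hz, nxy, nxz, nyz⟩ := hcard
  obtain ⟨hc, hlen, hchord⟩ := hhole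
  have axy : G.Adj x y := hK.1.1 hx.1 hy.1 nxy
  have axz : G.Adj x z := hK.1.1 hx.1 hz.1 nxz
  have ayz : G.Adj y z := hK.1.1 hy.1 hz.1 nyz
  have hxs : x ∈ c.support := hx.2
  have exy : s(x, y) ∈ c.edges := hchord x y hx.2 hy.2 axy
  have exz : s(x, z) ∈ c.edges := hchord x z hx.2 hz.2 axz
  have eyz : s(y, z) ∈ c.edges := hchord y z hy.2 hz.2 ayz
  set c' := c.rotate _ hxs with hc'def
  have hc' : c'.IsCycle := hc.rotate hxs
  have hlenpos : 0 < c.length := by have := hc.three_le_length; omega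
  have ememb : ∀ e, e ∈ c'.edges ↔ e ∈ c.edges := fun e => (c.rotate_edges _ hxs).mem_iff
  have hy' : y ∈ c'.support := (my_mem_support_rotate_iff hlenpos hxs y).mpr hy.2
  have hlen' : c'.length = c.length := my_length_rotate c hxs
  set p := c'.takeUntil y hy' with hpdef
  set q := c'.dropUntil y hy' with hqdef
  obtain ⟨hppath, hqpath, hedisj, hppos, hqpos⟩ := my_split_facts hc' hy' (Ne.symm nxy)
  rw [← hpdef] at hppath hppos
  rw [← hqdef] at hqpath hqpos
  rw [← hpdef, ← hqdef] at hedisj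
  have hspec := take_spec c' hy'
  rw [← hpdef, ← hqdef] at hspec
  have hedges : c'.edges = p.edges ++ q.edges := by rw [← hspec, edges_append]
  have hlensum : p.length + q.length = c.length := by
    have h := congrArg Walk.length hspec
    rw [length_append] at h
    omega
  have exy' : s(x, y) ∈ p.edges ++ q.edges := by rw [← hedges]; exact (ememb _).mpr exy
  have exz' : s(x, z) ∈ p.edges ++ q.edges := by rw [← hedges]; exact (ememb _).mpr exz
  have eyz' : s(y, z) ∈ p.edges ++ q.edges := by rw [← hedges]; exact (ememb _).mpr eyz
  rcases List.mem_append.mp exy' with hA | hB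
  · -- chord x-y is the first piece
    have hp1 : p.length = 1 := my_path_length_one hppath hA
    have hpe : p.edges = [s(x, y)] := my_edges_of_length_one hp1
    have eyzq : s(y, z) ∈ q.edges := by
      rcases List.mem_append.mp eyz' with h | h
      · rw [hpe, List.mem_singleton, Sym2.eq_iff] at h
        rcases h with ⟨h1, -⟩ | ⟨-, h2⟩
        · exact absurd h1.symm nxy
        · exact absurd h2 (Ne.symm nxz)
      · exact h
    have exzq : s(x, z) ∈ q.edges := by
      rcases List.mem_append.mp exz' with h | h
      · rw [hpe, List.mem_singleton, Sym2.eq_iff] at h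
        rcases h with ⟨-, h2⟩ | ⟨h1, -⟩
        · exact absurd h2 (Ne.symm nyz)
        · exact absurd h1 nxy
      · exact h
    obtain ⟨hadj2, q', hq'⟩ := my_eq_cons_of_edge_start hqpath eyzq
    rw [hq'] at exzq hqpath
    have hq'path := ((cons_isPath_iff _ _).mp hqpath).1
    have exzq' : s(x, z) ∈ q'.edges := by
      rw [edges_cons, List.mem_cons] at exzq
      rcases exzq with h | h
      · rw [Sym2.eq_iff] at h
        rcases h with ⟨h1, -⟩ | ⟨h1, -⟩
        · exact absurd h1 nxy
        · exact absurd h1 nxz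
      · exact h
    have hq'1 : q'.length = 1 := my_path_length_one hq'path (by rwa [Sym2.eq_swap] at exzq')
    have : q.length = 2 := by rw [hq']; simp [hq'1]
    omega
  · -- chord x-y is the last piece
    have hq1 : q.length = 1 := my_path_length_one hqpath (by rwa [Sym2.eq_swap] at hB)
    have hqe : q.edges = [s(y, x)] := my_edges_of_length_one hq1
    have exzp : s(x, z) ∈ p.edges := by
      rcases List.mem_append.mp exz' with h | h
      · exact h
      · rw [hqe, List.mem_singleton, Sym2.eq_iff] at h
        rcases h with ⟨h1, -⟩ | ⟨-, h2⟩
        · exact absurd h1 nxy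
        · exact absurd h2 (Ne.symm nyz)
    have eyzp : s(y, z) ∈ p.edges := by
      rcases List.mem_append.mp eyz' with h | h
      · exact h
      · rw [hqe, List.mem_singleton, Sym2.eq_iff] at h
        rcases h with ⟨-, h2⟩ | ⟨h1, -⟩
        · exact absurd h2 (Ne.symm nxz)
        · exact absurd h1.symm nxy
    obtain ⟨hadj2, p', hp'⟩ := my_eq_cons_of_edge_start hppath exzp
    rw [hp'] at eyzp hppath
    have hp'path := ((cons_isPath_iff _ _).mp hppath).1
    have eyzp' : s(y, z) ∈ p'.edges := by
      rw [edges_cons, List.mem_cons] at eyzp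
      rcases eyzp with h | h
      · rw [Sym2.eq_iff] at h
        rcases h with ⟨h1, -⟩ | ⟨h1, -⟩
        · exact absurd h1.symm nxy
        · exact absurd h1 nyz
      · exact h
    have hp'1 : p'.length = 1 := my_path_length_one hp'path (by rwa [Sym2.eq_swap] at eyzp')
    have : p.length = 2 := by rw [hp']; simp [hp'1]
    omega

private lemma my_reverse {V : Type*} [Fintype V] {G : SimpleGraph V}
    (hdisj : G.HolesEdgeDisjoint) {K : Set V}
    (hK : G.IsNonEdgeMaxClique K) (huniq : ∀ K', G.IsNonEdgeMaxClique K' → K' = K) :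
    ∀ (n : ℕ) {v : V} (c : G.Walk v v), c.IsCycle → c.length = n →
      (K ∩ {x | x ∈ c.support}).ncard ≤ 2 → G.IsHole c := by
  classical
  intro n
  induction n using Nat.strong_induction_on with
  | _ n IH =>
  intro v c hc hlen hcard
  rcases Nat.lt_or_ge c.length 4 with h4 | h4
  · -- c is a triangle: impossible since its vertices all lie in K
    exfalso
    have h3 := hc.three_le_length
    have hlen3 : c.length = 3 := by omega
    clear hlen h4 h3
    cases c with
    | nil => simp at hlen3
    | cons ha c1 =>
      rename_i a
      cases c1 with
      | nil => simp at hlen3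
      | cons hb c2 =>
        rename_i b
        cases c2 with
        | nil => simp at hlen3
        | cons hcc c3 =>
          rename_i d
          cases c3 with
          | cons hd c4 => simp [Walk.length_cons] at hlen3
          | nil =>
            have hnd := hc.support_nodup
            simp only [Walk.support_cons, Walk.support_nil, List.tail_cons,
              List.nodup_cons, List.mem_cons, List.mem_singleton,
              List.not_mem_nil, not_or] at hnd
            obtain ⟨⟨hab, hav⟩, ⟨hbv, -⟩, -⟩ := hnd
            have hsub := my_triangle_subset hK huniq ha hcc.symm hb
            have hsup : ({v, a, b} : Set V) ⊆
                (K ∩ {x | x ∈ (Walk.cons ha (Walk.cons hb (Walk.cons hcc Walk.nil))).support}) := by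
              intro w hw
              refine ⟨hsub hw, ?_⟩
              simp only [Set.mem_insert_iff, Set.mem_singleton_iff] at hw
              simp only [Set.mem_setOf_eq, Walk.support_cons, Walk.support_nil,
                List.mem_cons, List.mem_singleton]
              tauto
            have h3' : ({v, a, b} : Set V).ncard = 3 :=
              Set.ncard_eq_three.mpr ⟨v, a, b, ha.ne, Ne.symm hbv, hab, rfl⟩
            have := Set.ncard_le_ncard hsup (Set.toFinite _)
            omega
  · refine ⟨hc, h4, ?_⟩
    by_contra hch
    push_neg at hch
    obtain ⟨x, y, hxs, hys, hadj, hne⟩ := hch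
    have hlenpos : 0 < c.length := by omega
    set c' := c.rotate _ hxs with hc'def
    have hc' : c'.IsCycle := hc.rotate hxs
    have ememb : ∀ e, e ∈ c'.edges ↔ e ∈ c.edges := fun e => (c.rotate_edges _ hxs).mem_iff
    have smemb := my_mem_support_rotate_iff hlenpos hxs
    have hy' : y ∈ c'.support := (smemb y).mpr hys
    have hlen' : c'.length = c.length := my_length_rotate c hxs
    set p := c'.takeUntil y hy' with hpdef
    set q := c'.dropUntil y hy' with hqdef
    obtain ⟨hppath, hqpath, hedisj, hppos, hqpos⟩ := my_split_facts hc' hy' hadj.ne'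
    rw [← hpdef] at hppath hppos
    rw [← hqdef] at hqpath hqpos
    rw [← hpdef, ← hqdef] at hedisj
    have hspec := take_spec c' hy'
    rw [← hpdef, ← hqdef] at hspec
    have hedges : c'.edges = p.edges ++ q.edges := by rw [← hspec, edges_append]
    have hlensum : p.length + q.length = c.length := by
      have h := congrArg Walk.length hspec
      rw [length_append] at h
      omega
    have hnotin : s(x, y) ∉ c'.edges := fun h => hne ((ememb _).mp h)
    have hp2 : 2 ≤ p.length := by
      by_contra h
      have hp1 : p.length = 1 := by omega
      apply hnotin
      rw [hedges]
      exact List.mem_append_left _ (by rw [my_edges_of_length_one hp1]; simp)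
    have hq2 : 2 ≤ q.length := by
      by_contra h
      have hq1 : q.length = 1 := by omega
      apply hnotin
      rw [hedges]
      refine List.mem_append_right _ ?_
      rw [my_edges_of_length_one hq1, Sym2.eq_swap]
      simp
    set C1 : G.Walk x x := Walk.cons hadj p.reverse with hC1def
    set C2 : G.Walk x x := Walk.cons hadj q with hC2def
    have hC1 : C1.IsCycle := by
      refine (cons_isCycle_iff _ _).mpr ⟨hppath.reverse, ?_⟩
      rw [edges_reverse, List.mem_reverse]
      exact fun h => hnotin (hedges ▸ List.mem_append_left _ h)
    have hC2 : C2.IsCycle := by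
      refine (cons_isCycle_iff _ _).mpr ⟨hqpath, ?_⟩
      exact fun h => hnotin (hedges ▸ List.mem_append_right _ h)
    have hC1len : C1.length = p.length + 1 := by
      rw [hC1def, Walk.length_cons, length_reverse]
    have hC2len : C2.length = q.length + 1 := by
      rw [hC2def, Walk.length_cons]
    have hsubsup : ∀ w, w ∈ p.support ∨ w ∈ q.support → w ∈ c.support := by
      intro w hw
      rcases hw with hw | hw
      · exact (smemb w).mp (support_takeUntil_subset c' hy' (hpdef ▸ hw))
      · exact (smemb w).mp (support_dropUntil_subset c' hy' (hqdef ▸ hw))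
    have hsub1 : (K ∩ {w | w ∈ C1.support}).ncard ≤ 2 := by
      refine le_trans (Set.ncard_le_ncard ?_ (Set.toFinite _)) hcard
      rintro w ⟨hwK, hw⟩
      refine ⟨hwK, ?_⟩
      rw [hC1def] at hw
      simp only [Set.mem_setOf_eq, Walk.support_cons, List.mem_cons] at hw
      rcases hw with rfl | hw
      · exact hxs
      · rw [support_reverse, List.mem_reverse] at hw
        exact hsubsup w (Or.inl hw)
    have hsub2 : (K ∩ {w | w ∈ C2.support}).ncard ≤ 2 := by
      refine le_trans (Set.ncard_le_ncard ?_ (Set.toFinite _)) hcard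
      rintro w ⟨hwK, hw⟩
      refine ⟨hwK, ?_⟩
      rw [hC2def] at hw
      simp only [Set.mem_setOf_eq, Walk.support_cons, List.mem_cons] at hw
      rcases hw with rfl | hw
      · exact hxs
      · exact hsubsup w (Or.inr hw)
    have hhole1 : G.IsHole C1 := IH C1.length (by omega) C1 hC1 rfl hsub1
    have hhole2 : G.IsHole C2 := IH C2.length (by omega) C2 hC2 rfl hsub2
    have hxyC1 : s(x, y) ∈ C1.edges := by rw [hC1def, edges_cons]; exact List.mem_cons_self
    have hxyC2 : s(x, y) ∈ C2.edges := by rw [hC2def, edges_cons]; exact List.mem_cons_self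
    obtain ⟨e, he⟩ := List.exists_mem_of_ne_nil p.edges
      (List.ne_nil_of_length_pos (by rw [length_edges]; omega))
    have heC1 : e ∈ C1.edges := by
      rw [hC1def, edges_cons]
      exact List.mem_cons_of_mem _ (by rw [edges_reverse, List.mem_reverse]; exact he)
    have heC2 : e ∉ C2.edges := by
      rw [hC2def, edges_cons]
      rw [List.mem_cons]
      rintro (rfl | h)
      · exact hnotin (hedges ▸ List.mem_append_left _ he)
      · exact hedisj he h
    rcases hdisj C1 C2 hhole1 hhole2 with hsame | hdis
    · exact heC2 ((hsame e).mp heC1)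
    · exact hdis _ hxyC1 hxyC2

end Aux

/-- **Lemma 2.** In a connected graph whose holes are pairwise edge-disjoint
and which has exactly one non-edge maximal clique `K`, a cycle is a hole iff it meets `K`
in at most two vertices. -/
theorem cycle_isHole_iff_meets_clique_in_at_most_two
    {V : Type*} [Fintype V] (G : SimpleGraph V) (hconn : G.Connected)
    (hdisj : G.HolesEdgeDisjoint) (K : Set V)
    (hK : G.IsNonEdgeMaxClique K)
    (huniq : ∀ K', G.IsNonEdgeMaxClique K' → K' = K)
    {v : V} (c : G.Walk v v) (hc : c.IsCycle) :
    G.IsHole c ↔ (K ∩ {x | x ∈ c.support}).ncard ≤ 2 := by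
  constructor
  · exact fun h => my_forward hK huniq h
  · exact fun h => my_reverse hdisj hK huniq c.length c hc rfl h
end

section
/- Let G be a connected graph with exactly h holes such that all holes of G are pairwise edge-disjoint and G has exactly one non-edge maximal clique K. If K has h+1 vertices, then there exists a vertex v of K satisfying at least one of the following: (a) there is no K-avoiding path from v to any vertex lying on any hole of G; (b) v is incident to an edge that lies both on K and on some hole of G, and v lies on no hole other than that one. -/
open SimpleGraph

namespace HoleProof
variable {V : Type*} {G : SimpleGraph V}

lemma mem_support_of_mem_edges' {u v x : V} {p : G.Walk u v} {e : Sym2 V}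
    (he : e ∈ p.edges) (hx : x ∈ e) : x ∈ p.support := by
  induction e with
  | _ a b =>
    rcases Sym2.mem_iff.mp hx with rfl | rfl
    · exact p.fst_mem_support_of_mem_edges he
    · exact p.snd_mem_support_of_mem_edges he

lemma mem_edge_or_end {u v x : V} (p : G.Walk u v) (hx : x ∈ p.support) :
    x = v ∨ ∃ e ∈ p.edges, x ∈ e := by
  induction p with
  | nil => simp at hx; exact Or.inl hx
  | @cons a b c h q ih =>
    rw [Walk.support_cons, List.mem_cons] at hx
    rcases hx with rfl | hx
    · exact Or.inr ⟨s(x, b), by simp [Walk.edges_cons], Sym2.mem_mk_left _ _⟩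
    · rcases ih hx with h' | ⟨e, he, hxe⟩
      · exact Or.inl h'
      · exact Or.inr ⟨e, by simp [Walk.edges_cons, he], hxe⟩

lemma exists_edge_of_mem_support {u x : V} (c : G.Walk u u) (hc : c.length ≠ 0)
    (hx : x ∈ c.support) : ∃ e ∈ c.edges, x ∈ e := by
  rcases mem_edge_or_end c hx with rfl | h
  · cases c with
    | nil => simp at hc
    | @cons a b c h q => exact ⟨s(x, b), by simp [Walk.edges_cons], Sym2.mem_mk_left _ _⟩
  · exact h

lemma path_head_edge_unique {u v : V} {p : G.Walk u v} (hp : p.IsPath)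
    {e₁ e₂ : Sym2 V} (h₁ : e₁ ∈ p.edges) (h₂ : e₂ ∈ p.edges)
    (hu₁ : u ∈ e₁) (hu₂ : u ∈ e₂) : e₁ = e₂ := by
  cases p with
  | nil => simp at h₁
  | cons h q =>
    rw [Walk.cons_isPath_iff] at hp
    rw [Walk.edges_cons, List.mem_cons] at h₁ h₂
    have key : ∀ e : Sym2 V, e ∈ q.edges → u ∈ e → False := fun e he hue =>
      hp.2 (mem_support_of_mem_edges' he hue)
    rcases h₁ with rfl | h₁
    · rcases h₂ with rfl | h₂
      · rfl
      · exact absurd (key _ h₂ hu₂) (by simp)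
    · exact absurd (key _ h₁ hu₁) (by simp)

lemma closed_isPath_length_eq_zero {u : V} {p : G.Walk u u} (hp : p.IsPath) :
    p.length = 0 := by
  cases p with
  | nil => rfl
  | cons h q =>
    exfalso
    rw [Walk.cons_isPath_iff] at hp
    exact hp.2 q.end_mem_support

lemma mem_edges_rotate [DecidableEq V] {u x : V} {c : G.Walk u u} (hx : x ∈ c.support) {e : Sym2 V} :
    e ∈ (c.rotate _ hx).edges ↔ e ∈ c.edges :=
  (c.rotate_edges _ hx).perm.mem_iff

lemma length_rotate [DecidableEq V] {u x : V} (c : G.Walk u u) (hx : x ∈ c.support) :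
    (c.rotate _ hx).length = c.length := by
  have := (c.rotate_edges _ hx).perm.length_eq
  rwa [Walk.length_edges, Walk.length_edges] at this

lemma stepping {x y z : V} (hxz : x ≠ z) (hyz : y ≠ z)
    (h : G.Adj x y) {q : G.Walk y x}
    (hc : (Walk.cons h q).IsCycle) (hlen : 4 ≤ (Walk.cons h q).length)
    (e2 : s(x, z) ∈ (Walk.cons h q).edges) (e3 : s(y, z) ∈ (Walk.cons h q).edges) : False := by
  have hxy : x ≠ y := h.ne
  have hq : q.IsPath := by rw [Walk.isPath_def]; simpa using hc.support_nodup
  have h3q : s(y, z) ∈ q.edges := by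
    rw [Walk.edges_cons, List.mem_cons] at e3
    rcases e3 with h' | h'
    · rw [Sym2.eq_iff] at h'
      rcases h' with ⟨rfl, rfl⟩ | ⟨h1, h2⟩
      · exact absurd rfl hxy
      · exact absurd h2.symm hxz
    · exact h'
  cases q with
  | nil => simp at h3q
  | @cons _ b _ h₂ q₂ =>
    have hb : b = z := by
      have he : s(y, b) ∈ (Walk.cons h₂ q₂).edges := by simp [Walk.edges_cons]
      have := path_head_edge_unique hq h3q he (Sym2.mem_mk_left _ _) (Sym2.mem_mk_left _ _)
      rw [Sym2.eq_iff] at this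
      rcases this with ⟨-, h2⟩ | ⟨h1, h2⟩
      · exact h2.symm
      · exact absurd h2.symm hyz
    subst hb
    have h2q : s(x, b) ∈ q₂.edges := by
      rw [Walk.edges_cons, List.mem_cons] at e2
      rcases e2 with h' | h'
      · rw [Sym2.eq_iff] at h'
        rcases h' with ⟨-, h2'⟩ | ⟨h1', -⟩
        · exact absurd h2'.symm hyz
        · exact absurd h1' hxy
      · rw [Walk.edges_cons, List.mem_cons] at h'
        rcases h' with h' | h'
        · rw [Sym2.eq_iff] at h'
          rcases h' with ⟨h1', -⟩ | ⟨-, h2'⟩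
          · exact absurd h1' hxy
          · exact absurd h2'.symm hyz
        · exact h'
    have hq₂ : q₂.IsPath := hq.of_cons
    cases q₂ with
    | nil => simp at h2q
    | @cons _ b₃ _ h₃ q₃ =>
      have hb₃ : x = b₃ := by
        have he : s(b, b₃) ∈ (Walk.cons h₃ q₃).edges := by simp [Walk.edges_cons]
        have := path_head_edge_unique hq₂ h2q he (Sym2.mem_mk_right _ _) (Sym2.mem_mk_left _ _)
        rw [Sym2.eq_iff] at this
        rcases this with ⟨h1', -⟩ | ⟨h1', -⟩
        · exact absurd h1' hxz
        · exact h1'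
      subst hb₃
      have hq₃ : q₃.IsPath := hq₂.of_cons
      have hlen₃ : q₃.length = 0 := closed_isPath_length_eq_zero hq₃
      simp [Walk.length_cons, hlen₃] at hlen

lemma no_triangle_head {x y z : V} {c : G.Walk x x} (hc : c.IsCycle) (hlen : 4 ≤ c.length)
    (hxy : x ≠ y) (hxz : x ≠ z) (hyz : y ≠ z)
    (e1 : s(x, y) ∈ c.edges) (e2 : s(x, z) ∈ c.edges) (e3 : s(y, z) ∈ c.edges) : False := by
  cases c with
  | nil => simp at e1
  | @cons _ b _ h q =>
    have hq : q.IsPath := by rw [Walk.isPath_def]; simpa using hc.support_nodup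
    have hclass : ∀ w : V, s(x, w) ∈ (Walk.cons h q).edges → s(x, w) ∈ q.edges ∨ w = b := by
      intro w hw
      rw [Walk.edges_cons, List.mem_cons] at hw
      rcases hw with hw | hw
      · rw [Sym2.eq_iff] at hw
        rcases hw with ⟨-, h2⟩ | ⟨h1, h2⟩
        · exact Or.inr h2
        · exact Or.inr (h2.trans h1)
      · exact Or.inl hw
    rcases hclass y e1 with hyq | hby
    · rcases hclass z e2 with hzq | hbz
      · have h1 : s(x, y) ∈ q.reverse.edges := by
          rw [Walk.edges_reverse, List.mem_reverse]; exact hyq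
        have h2 : s(x, z) ∈ q.reverse.edges := by
          rw [Walk.edges_reverse, List.mem_reverse]; exact hzq
        have := path_head_edge_unique hq.reverse h1 h2 (Sym2.mem_mk_left _ _)
          (Sym2.mem_mk_left _ _)
        rw [Sym2.eq_iff] at this
        rcases this with ⟨-, h2'⟩ | ⟨h1', -⟩
        · exact hyz h2'
        · exact hxz h1'
      · rw [hbz] at hxz hyz e2 e3
        exact stepping hxy (Ne.symm hyz) h hc hlen e1 (by rwa [Sym2.eq_swap] at e3)
    · rw [hby] at hxy hyz e1 e3
      exact stepping hxz hyz h hc hlen e2 e3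

lemma no_triangle [DecidableEq V] {u x y z : V} {c : G.Walk u u} (hc : c.IsCycle) (hlen : 4 ≤ c.length)
    (hx : x ∈ c.support) (hxy : x ≠ y) (hxz : x ≠ z) (hyz : y ≠ z)
    (e1 : s(x, y) ∈ c.edges) (e2 : s(x, z) ∈ c.edges) (e3 : s(y, z) ∈ c.edges) : False :=
  no_triangle_head (hc.rotate hx) (by rw [length_rotate c hx]; exact hlen) hxy hxz hyz
    ((mem_edges_rotate hx).mpr e1) ((mem_edges_rotate hx).mpr e2) ((mem_edges_rotate hx).mpr e3)

lemma clique_on_hole_le_two {K : Set V} (hK : G.IsClique K) {u : V} {c : G.Walk u u}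
    (hhole : G.IsHole c) : {x | x ∈ K ∧ x ∈ c.support}.ncard ≤ 2 := by
  by_contra hcon
  push_neg at hcon
  have hfin : {x | x ∈ K ∧ x ∈ c.support}.Finite :=
    c.support.finite_toSet.subset fun x hx => hx.2
  rw [Set.two_lt_ncard_iff hfin] at hcon
  obtain ⟨a, b, d, ⟨haK, has⟩, ⟨hbK, hbs⟩, ⟨hdK, hds⟩, hab, had, hbd⟩ := hcon
  obtain ⟨hcyc, hlen, hchord⟩ := hhole
  classical
  exact no_triangle hcyc hlen has hab had hbd
    (hchord a b has hbs (hK haK hbK hab)) (hchord a d has hds (hK haK hdK had))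
    (hchord b d hbs hds (hK hbK hdK hbd))

lemma edge_mem_of_length_one {a b : V} {p : G.Walk a b} (h : p.length = 1) :
    s(a, b) ∈ p.edges := by
  cases p with
  | nil => simp at h
  | @cons _ c _ had q =>
    have h0 : q.length = 0 := by simpa using h
    have hc := q.eq_of_length_eq_zero h0
    subst hc
    simp [Walk.edges_cons]

lemma exists_maxClique [Finite V] {S : Set V} (hS : G.IsClique S) :
    ∃ M, G.IsMaxClique M ∧ S ⊆ M := by
  have hfin : {T : Set V | G.IsClique T ∧ S ⊆ T}.Finite := Set.toFinite _
  obtain ⟨M, hM, hmax⟩ := Set.Finite.exists_maximalFor id _ hfin ⟨S, hS, subset_rfl⟩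
  exact ⟨M, ⟨hM.1, fun K' hK' hMK' => Set.Subset.antisymm (hmax ⟨hK', hM.2.trans hMK'⟩ hMK') hMK'⟩, hM.2⟩

def avoidG (G : SimpleGraph V) (K : Set V) (v w : V) : SimpleGraph V where
  Adj a b := G.Adj a b ∧ s(a, b) ≠ s(v, w) ∧ (a ∉ K ∨ a = v ∨ a = w) ∧ (b ∉ K ∨ b = v ∨ b = w)
  symm := by
    constructor
    rintro a b ⟨h1, h2, h3, h4⟩
    refine ⟨h1.symm, ?_, h4, h3⟩
    rwa [Sym2.eq_swap]
  loopless := ⟨fun a h => G.loopless.irrefl a h.1⟩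

lemma avoidG_le (G : SimpleGraph V) (K : Set V) (v w : V) : avoidG G K v w ≤ G :=
  fun _ _ h => h.1

lemma avoidG_support {K : Set V} {v w a b : V} (p : (avoidG G K v w).Walk a b)
    (ha : a ∉ K ∨ a = v ∨ a = w) : ∀ z ∈ p.support, z ∉ K ∨ z = v ∨ z = w := by
  induction p with
  | nil => intro z hz; rw [Walk.mem_support_nil_iff] at hz; subst hz; exact ha
  | cons h q ih =>
    intro z hz
    rw [Walk.support_cons, List.mem_cons] at hz
    rcases hz with rfl | hz
    · exact ha
    · exact ih h.2.2.2 z hz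

lemma avoidG_edge_ne {K : Set V} {v w a b : V} (p : (avoidG G K v w).Walk a b) :
    ∀ e ∈ p.edges, e ≠ s(v, w) := by
  intro e he
  induction e with
  | _ c d =>
    have h := p.edges_subset_edgeSet he
    exact ((SimpleGraph.mem_edgeSet (G := avoidG G K v w)).mp h).2.1

lemma key_hole [Finite V] {K : Set V}
    (hK : G.IsNonEdgeMaxClique K)
    (huniq : ∀ K', G.IsNonEdgeMaxClique K' → K' = K)
    {v w : V} (hv : v ∈ K) (hw : w ∈ K) (hvw : v ≠ w)
    (hreach : (avoidG G K v w).Reachable v w) :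
    ∃ (c : G.Walk w w), G.IsHole c ∧ s(v, w) ∈ c.edges := by
  classical
  obtain ⟨P, hPpath, hPlen⟩ := hreach.exists_path_of_dist
  have hmin : ∀ (W : (avoidG G K v w).Walk v w), P.length ≤ W.length := fun W => by
    rw [hPlen]; exact SimpleGraph.dist_le W
  have hadj : G.Adj v w := hK.1.1 hv hw hvw
  -- a chord of the shortest path must be one of its edges
  have sub : ∀ x y (hx : x ∈ P.support), (avoidG G K v w).Adj x y →
      ∀ hy : y ∈ (P.dropUntil x hx).support, s(x, y) ∈ P.edges := by
    intro x y hx hxyadj hy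
    have hxy : x ≠ y := hxyadj.ne
    have h1 := congrArg Walk.length (P.take_spec hx)
    rw [Walk.length_append] at h1
    have h2 := congrArg Walk.length ((P.dropUntil x hx).take_spec hy)
    rw [Walk.length_append] at h2
    have hW := hmin ((P.takeUntil x hx).append
      (Walk.cons hxyadj ((P.dropUntil x hx).dropUntil y hy)))
    rw [Walk.length_append, Walk.length_cons] at hW
    have hT2 : ((P.dropUntil x hx).takeUntil y hy).length = 1 := by
      have hne : ((P.dropUntil x hx).takeUntil y hy).length ≠ 0 := fun h0 =>
        hxy (Walk.eq_of_length_eq_zero h0)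
      omega
    have := edge_mem_of_length_one hT2
    exact P.edges_dropUntil_subset hx ((P.dropUntil x hx).edges_takeUntil_subset hy this)
  have hchordP : ∀ x y, x ∈ P.support → y ∈ P.support →
      (avoidG G K v w).Adj x y → s(x, y) ∈ P.edges := by
    intro x y hxs hys hxyadj
    have hxy : x ≠ y := hxyadj.ne
    by_cases hd1 : y ∈ (P.dropUntil x hxs).support
    · exact sub x y hxs hxyadj hd1
    · by_cases hd2 : x ∈ (P.dropUntil y hys).support
      · rw [Sym2.eq_swap]; exact sub y x hys hxyadj.symm hd2
      · exfalso
        have hy' : y ∈ (P.takeUntil x hxs).support := by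
          have hmem := hys
          conv at hmem => rw [← P.take_spec hxs]
          rw [Walk.mem_support_append_iff] at hmem
          exact hmem.resolve_right hd1
        have hx' : x ∈ (P.takeUntil y hys).support := by
          have hmem := hxs
          conv at hmem => rw [← P.take_spec hys]
          rw [Walk.mem_support_append_iff] at hmem
          exact hmem.resolve_right hd2
        -- length comparisons
        have key : ∀ (a b : V) (has : a ∈ P.support) (hbs : b ∈ P.support)
            (hba : b ∈ (P.takeUntil a has).support),
            (P.takeUntil b hbs).length ≤ ((P.takeUntil a has).takeUntil b hba).length := by
          intro a b has hbs hba
          have hWl := hmin (((P.takeUntil a has).takeUntil b hba).append (P.dropUntil b hbs))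
          rw [Walk.length_append] at hWl
          have hsplit := congrArg Walk.length (P.take_spec hbs)
          rw [Walk.length_append] at hsplit
          omega
        have k1 := key x y hxs hys hy'
        have k2 := key y x hys hxs hx'
        have l1 : ((P.takeUntil x hxs).takeUntil y hy').length ≤ (P.takeUntil x hxs).length :=
          Walk.length_takeUntil_le _ hy'
        have l2 : ((P.takeUntil y hys).takeUntil x hx').length ≤ (P.takeUntil y hys).length :=
          Walk.length_takeUntil_le _ hx'
        -- conclude the takeUntil of takeUntil is full
        have heq : ((P.takeUntil x hxs).takeUntil y hy').length
            = (P.takeUntil x hxs).length := by omega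
        have hsplit3 := congrArg Walk.length ((P.takeUntil x hxs).take_spec hy')
        rw [Walk.length_append] at hsplit3
        have hz : ((P.takeUntil x hxs).dropUntil y hy').length = 0 := by omega
        exact hxy (Walk.eq_of_length_eq_zero hz).symm
  -- transfer to G
  have hGedges : ∀ e ∈ P.edges, e ∈ G.edgeSet := fun e he =>
    SimpleGraph.edgeSet_mono (avoidG_le G K v w) (P.edges_subset_edgeSet he)
  set P' : G.Walk v w := P.transfer G hGedges with hP'
  have hP'path : P'.IsPath := hPpath.transfer _
  have hP'edges : P'.edges = P.edges := P.edges_transfer _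
  have hP'supp : P'.support = P.support := P.support_transfer _
  have hnotvw : s(w, v) ∉ P'.edges := by
    rw [hP'edges, Sym2.eq_swap]
    intro hmem
    exact avoidG_edge_ne P _ hmem rfl
  set C : G.Walk w w := Walk.cons hadj.symm P' with hC
  have hcyc : C.IsCycle := by
    rw [hC, Walk.cons_isCycle_iff]
    exact ⟨hP'path, hnotvw⟩
  have hmemC : s(v, w) ∈ C.edges := by
    rw [hC, Walk.edges_cons, Sym2.eq_swap]
    exact List.mem_cons_self
  have hsuppC : ∀ z ∈ C.support, z ∈ P.support := by
    intro z hz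
    rw [hC, Walk.support_cons, List.mem_cons] at hz
    rcases hz with rfl | hz
    · exact P.end_mem_support
    · rwa [hP'supp] at hz
  have hlen2 : 2 ≤ P.length := by
    rcases Nat.lt_or_ge P.length 2 with hl | hl
    · interval_cases hle : P.length
      · exact absurd (Walk.eq_of_length_eq_zero hle) hvw
      · exact absurd rfl (avoidG_edge_ne P _ (edge_mem_of_length_one hle))
    · exact hl
  rcases Nat.lt_or_ge P.length 3 with hl3 | hl3
  · -- triangle case: contradiction
    exfalso
    have hlen2' : P.length = 2 := by omega
    clear hmin sub hchordP
    cases P with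
    | nil => simp at hlen2'
    | @cons _ m _ h₁ q₁ =>
      have hq₁ : q₁.length = 1 := by simpa using hlen2'
      have hvm : G.Adj v m := h₁.1
      have hmw : G.Adj m w := by
        have := edge_mem_of_length_one hq₁
        exact (avoidG_le G K v w) (q₁.adj_of_mem_edges this)
      have hmK : m ∉ K := by
        have hcond := h₁.2.2.2
        have hmv : m ≠ v := hvm.ne'
        have hmwne : m ≠ w := hmw.ne
        tauto
      have hclique : G.IsClique {v, w, m} := by
        intro a ha b hb hab
        simp only [Set.mem_insert_iff, Set.mem_singleton_iff] at ha hb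
        rcases ha with rfl | rfl | rfl <;> rcases hb with rfl | rfl | rfl <;>
          first
            | exact absurd rfl hab
            | exact hadj | exact hadj.symm | exact hvm | exact hvm.symm
            | exact hmw | exact hmw.symm
      obtain ⟨M, hMmax, hMsub⟩ := exists_maxClique hclique
      have h3 : ({v, w, m} : Set V).ncard = 3 := by
        rw [Set.ncard_eq_three]
        exact ⟨v, w, m, hvw, hvm.ne, hmw.ne', rfl⟩
      have hMne : G.IsNonEdgeMaxClique M :=
        ⟨hMmax, h3 ▸ Set.ncard_le_ncard hMsub (Set.toFinite M)⟩
      have := huniq M hMne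
      exact hmK (this ▸ hMsub (by simp))
  · -- hole case
    refine ⟨C, ⟨hcyc, ?_, ?_⟩, hmemC⟩
    · rw [hC, Walk.length_cons, Walk.length_transfer]
      omega
    · intro x y hxC hyC hGxy
      by_cases hevw : s(x, y) = s(v, w)
      · rw [hevw]; exact hmemC
      · have hxP := hsuppC x hxC
        have hyP := hsuppC y hyC
        have hcondP := avoidG_support P (Or.inr (Or.inl rfl))
        have hHadj : (avoidG G K v w).Adj x y :=
          ⟨hGxy, hevw, hcondP x hxP, hcondP y hyP⟩
        have := hchordP x y hxP hyP hHadj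
        rw [hC, Walk.edges_cons]
        exact List.mem_cons_of_mem _ (by rwa [hP'edges])

lemma mem_support_rotate [DecidableEq V] {u x z : V} {c : G.Walk u u} (hlen : c.length ≠ 0)
    (hx : x ∈ c.support) (hz : z ∈ c.support) : z ∈ (c.rotate _ hx).support := by
  obtain ⟨e, he, hze⟩ := exists_edge_of_mem_support c hlen hz
  exact mem_support_of_mem_edges' ((mem_edges_rotate hx).mpr he) hze

lemma mem_support_of_rotate [DecidableEq V] {u x z : V} {c : G.Walk u u} (hlen : c.length ≠ 0)
    (hx : x ∈ c.support) (hz : z ∈ (c.rotate _ hx).support) : z ∈ c.support := by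
  have hlen' : (c.rotate _ hx).length ≠ 0 := by rwa [length_rotate]
  obtain ⟨e, he, hze⟩ := exists_edge_of_mem_support _ hlen' hz
  exact mem_support_of_mem_edges' ((mem_edges_rotate hx).mp he) hze

lemma split_tail [DecidableEq V] {x t : V} (c₂ : G.Walk x x) (ht : t ∈ c₂.support) :
    c₂.support.tail = (c₂.takeUntil t ht).support.tail ++ (c₂.dropUntil t ht).support.tail := by
  have h := congrArg Walk.support (c₂.take_spec ht)
  rw [Walk.support_append] at h
  have := congrArg List.tail h
  rw [← this]
  rw [Walk.support_eq_cons (c₂.takeUntil t ht)]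
  simp

lemma arc_disjoint [DecidableEq V] {x t : V} {c₂ : G.Walk x x} (hc : c₂.IsCycle)
    (ht : t ∈ c₂.support) {z : V} (hzx : z ≠ x)
    (h1 : z ∈ (c₂.takeUntil t ht).support) (h2 : z ∈ (c₂.dropUntil t ht).support.tail) :
    False := by
  have hsplit := split_tail c₂ ht
  have hnd : c₂.support.tail.Nodup := hc.support_nodup
  rw [hsplit, List.nodup_append] at hnd
  have hz1 : z ∈ (c₂.takeUntil t ht).support.tail := by
    rw [Walk.support_eq_cons (c₂.takeUntil t ht), List.mem_cons] at h1
    exact h1.resolve_left hzx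
  exact hnd.2.2 _ hz1 _ h2 rfl

lemma nav_to_K [DecidableEq V] {K : Set V} (hKcl : G.IsClique K) {u x w : V} {c : G.Walk u u}
    (hhole : G.IsHole c) (hx : x ∈ c.support) (hxK : x ∉ K) (hw : w ∈ c.support) (hwK : w ∈ K) :
    ∃ q : G.Walk x w, ∀ z ∈ q.support, z ∉ K ∨ z = w := by
  obtain ⟨hcyc, hlen4, hchord⟩ := hhole
  have hlen0 : c.length ≠ 0 := by omega
  have hcyc₂ : (c.rotate _ hx).IsCycle := hcyc.rotate hx
  have hw₂ : w ∈ (c.rotate _ hx).support := mem_support_rotate hlen0 hx hw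
  have hback : ∀ z, z ∈ (c.rotate _ hx).support → z ∈ c.support := fun z hz =>
    mem_support_of_rotate hlen0 hx hz
  by_cases hq : ∀ z ∈ ((c.rotate _ hx).takeUntil w hw₂).support, z ∉ K ∨ z = w
  · exact ⟨(c.rotate _ hx).takeUntil w hw₂, hq⟩
  · push_neg at hq
    obtain ⟨z, hz, hzK, hzw⟩ := hq
    refine ⟨((c.rotate _ hx).dropUntil w hw₂).reverse, ?_⟩
    intro y hy
    rw [Walk.support_reverse, List.mem_reverse] at hy
    by_contra hcon
    push_neg at hcon
    obtain ⟨hyK, hyw⟩ := hcon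
    have hy' : y ∈ ((c.rotate _ hx).dropUntil w hw₂).support.tail := by
      rw [Walk.support_eq_cons ((c.rotate _ hx).dropUntil w hw₂), List.mem_cons] at hy
      exact hy.resolve_left hyw
    have hzx : z ≠ x := fun h => hxK (h ▸ hzK)
    have hzy : z ≠ y := fun h => arc_disjoint hcyc₂ hw₂ hzx hz (h ▸ hy')
    have hle2 := clique_on_hole_le_two hKcl (G := G) (c := c) ⟨hcyc, hlen4, hchord⟩
    rw [← not_lt] at hle2
    apply hle2
    rw [Set.two_lt_ncard_iff (c.support.finite_toSet.subset fun a ha => ha.2)]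
    exact ⟨z, y, w, ⟨hzK, hback z (Walk.support_takeUntil_subset _ hw₂ hz)⟩,
      ⟨hyK, hback y (Walk.support_dropUntil_subset _ hw₂ (List.mem_of_mem_tail hy'))⟩,
      ⟨hwK, hw⟩, hzy, hzw, hyw⟩

lemma nav_avoid_K [DecidableEq V] {K : Set V} (hKcl : G.IsClique K) {u x x' : V} {c : G.Walk u u}
    (hhole : G.IsHole c) (hx : x ∈ c.support) (hx' : x' ∈ c.support)
    (hxK : x ∉ K) (hx'K : x' ∉ K) :
    ∃ q : G.Walk x x', ∀ z ∈ q.support, z ∉ K := by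
  obtain ⟨hcyc, hlen4, hchord⟩ := hhole
  have hlen0 : c.length ≠ 0 := by omega
  have hcyc₂ : (c.rotate _ hx).IsCycle := hcyc.rotate hx
  have ht : x' ∈ (c.rotate _ hx).support := mem_support_rotate hlen0 hx hx'
  have hback : ∀ z, z ∈ (c.rotate _ hx).support → z ∈ c.support := fun z hz =>
    mem_support_of_rotate hlen0 hx hz
  by_cases hq : ∀ z ∈ ((c.rotate _ hx).takeUntil x' ht).support, z ∉ K
  · exact ⟨(c.rotate _ hx).takeUntil x' ht, hq⟩
  · push_neg at hq
    obtain ⟨z, hz, hzK⟩ := hq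
    refine ⟨((c.rotate _ hx).dropUntil x' ht).reverse, ?_⟩
    intro y hy
    rw [Walk.support_reverse, List.mem_reverse] at hy
    intro hyK
    have hyx' : y ≠ x' := fun h => hx'K (h ▸ hyK)
    have hy' : y ∈ ((c.rotate _ hx).dropUntil x' ht).support.tail := by
      rw [Walk.support_eq_cons ((c.rotate _ hx).dropUntil x' ht), List.mem_cons] at hy
      exact hy.resolve_left hyx'
    have hzx : z ≠ x := fun h => hxK (h ▸ hzK)
    have hzy : z ≠ y := fun h => arc_disjoint hcyc₂ ht hzx hz (h ▸ hy')
    have hzc : z ∈ c.support := hback z (Walk.support_takeUntil_subset _ ht hz)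
    have hyc : y ∈ c.support :=
      hback y (Walk.support_dropUntil_subset _ ht (List.mem_of_mem_tail hy'))
    have hedge : s(z, y) ∈ c.edges := hchord z y hzc hyc (hKcl hzK hyK hzy)
    have hedge₂ : s(z, y) ∈ (c.rotate _ hx).edges := (mem_edges_rotate hx).mpr hedge
    have hsplitE := congrArg Walk.edges ((c.rotate _ hx).take_spec ht)
    rw [Walk.edges_append] at hsplitE
    rw [← hsplitE, List.mem_append] at hedge₂
    rcases hedge₂ with hE | hE
    · have hyTake : y ∈ ((c.rotate _ hx).takeUntil x' ht).support :=
        mem_support_of_mem_edges' hE (Sym2.mem_mk_right _ _)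
      exact arc_disjoint hcyc₂ ht (fun h => hxK (h ▸ hyK)) hyTake hy'
    · have hzd : z ∈ ((c.rotate _ hx).dropUntil x' ht).support :=
        mem_support_of_mem_edges' hE (Sym2.mem_mk_left _ _)
      have hzt : z ∈ ((c.rotate _ hx).dropUntil x' ht).support.tail := by
        rw [Walk.support_eq_cons ((c.rotate _ hx).dropUntil x' ht), List.mem_cons] at hzd
        exact hzd.resolve_left fun h => hx'K (h ▸ hzK)
      exact arc_disjoint hcyc₂ ht hzx hz hzt

def TypeII (G : SimpleGraph V) (K : Set V) (v : V) : Prop :=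
  ∃ w ∈ K, ∃ (u : V) (c : G.Walk u u), G.IsHole c ∧ s(v, w) ∈ c.edges

def TypeI (G : SimpleGraph V) (K : Set V) (v : V) : Prop :=
  ∃ (u : V) (c : G.Walk u u) (a : V) (p : G.Walk v a), G.IsHole c ∧ a ∈ c.support ∧
    (∀ z ∈ p.support, z ∉ K ∨ z = v) ∧ (a ∉ K ∨ a = v)

lemma reachable_avoidG {K : Set V} {v w : V} (W : G.Walk v w)
    (hsupp : ∀ z ∈ W.support, z ∉ K ∨ z = v ∨ z = w)
    (hedge : s(v, w) ∉ W.edges) : (avoidG G K v w).Reachable v w := by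
  have hW : ∀ e ∈ W.edges, e ∈ (avoidG G K v w).edgeSet := by
    intro e he
    induction e with
    | _ a b =>
      have hadj : G.Adj a b := W.adj_of_mem_edges he
      have ha : a ∈ W.support := W.fst_mem_support_of_mem_edges he
      have hb : b ∈ W.support := W.snd_mem_support_of_mem_edges he
      have hne : s(a, b) ≠ s(v, w) := fun h => hedge (h ▸ he)
      rw [SimpleGraph.mem_edgeSet]
      exact ⟨hadj, hne, hsupp a ha, hsupp b hb⟩
  exact ⟨W.transfer _ hW⟩

lemma end_edge_not_mem {v x : V} {p : G.Walk v x} (hp : p.IsPath) (hlen : 2 ≤ p.length) :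
    s(v, x) ∉ p.edges := by
  intro h
  cases p with
  | nil => simp at h
  | @cons _ b _ had q =>
    rw [Walk.cons_isPath_iff] at hp
    rw [Walk.edges_cons, List.mem_cons] at h
    rcases h with h | h
    · rw [Sym2.eq_iff] at h
      rcases h with ⟨-, h2⟩ | ⟨-, h2⟩
      · subst h2
        have := closed_isPath_length_eq_zero hp.1
        rw [Walk.length_cons] at hlen
        omega
      · exact hp.2 (h2 ▸ q.end_mem_support)
    · exact hp.2 (q.fst_mem_support_of_mem_edges h)

lemma combine [Finite V] [DecidableEq V] {K : Set V}
    (hK : G.IsNonEdgeMaxClique K) (huniq : ∀ K', G.IsNonEdgeMaxClique K' → K' = K)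
    {v v' : V} (hv : v ∈ K) (hv' : v' ∈ K) (hne : v ≠ v')
    {u : V} {c : G.Walk u u} (hhole : G.IsHole c)
    {a b : V} (ha : a ∈ c.support) (hb : b ∈ c.support)
    {p : G.Walk v a} (hp : ∀ z ∈ p.support, z ∉ K ∨ z = v) (haK : a ∉ K ∨ a = v)
    {p' : G.Walk v' b} (hp' : ∀ z ∈ p'.support, z ∉ K ∨ z = v') (hbK : b ∉ K ∨ b = v') :
    TypeII G K v := by
  have hKcl : G.IsClique K := hK.1.1
  have keyfin : (avoidG G K v v').Reachable v v' → TypeII G K v := by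
    intro hreach
    obtain ⟨c₀, hhole₀, hedge₀⟩ := key_hole hK huniq hv hv' hne hreach
    exact ⟨v', hv', _, c₀, hhole₀, hedge₀⟩
  have hv'notp : v' ∉ p.support := fun hmem => by
    rcases hp v' hmem with h | h
    · exact h hv'
    · exact hne h.symm
  have hvnotp' : v ∉ p'.support := fun hmem => by
    rcases hp' v hmem with h | h
    · exact h hv
    · exact hne h
  rcases haK with haK | rfl
  · rcases hbK with hbK | rfl
    · -- both a, b off K
      obtain ⟨q, hq⟩ := nav_avoid_K hKcl hhole ha hb haK hbK
      apply keyfin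
      apply reachable_avoidG (p.append (q.append p'.reverse))
      · intro z hz
        rw [Walk.mem_support_append_iff] at hz
        rcases hz with hz | hz
        · rcases hp z hz with h | h
          · exact Or.inl h
          · exact Or.inr (Or.inl h)
        · rw [Walk.mem_support_append_iff] at hz
          rcases hz with hz | hz
          · exact Or.inl (hq z hz)
          · rw [Walk.support_reverse, List.mem_reverse] at hz
            rcases hp' z hz with h | h
            · exact Or.inl h
            · exact Or.inr (Or.inr h)
      · rw [Walk.edges_append, Walk.edges_append]
        intro hmem
        rcases List.mem_append.mp hmem with hmem | hmem
        · exact hv'notp (p.snd_mem_support_of_mem_edges hmem)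
        · rcases List.mem_append.mp hmem with hmem | hmem
          · exact (hq v (q.fst_mem_support_of_mem_edges hmem)) hv
          · rw [Walk.edges_reverse, List.mem_reverse] at hmem
            exact hvnotp' (p'.fst_mem_support_of_mem_edges hmem)
    · -- a off K, b = v'
      obtain ⟨q, hq⟩ := nav_to_K hKcl hhole ha haK hb hv'
      apply keyfin
      apply reachable_avoidG (p.append q)
      · intro z hz
        rw [Walk.mem_support_append_iff] at hz
        rcases hz with hz | hz
        · rcases hp z hz with h | h
          · exact Or.inl h
          · exact Or.inr (Or.inl h)
        · rcases hq z hz with h | h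
          · exact Or.inl h
          · exact Or.inr (Or.inr h)
      · rw [Walk.edges_append]
        intro hmem
        rcases List.mem_append.mp hmem with hmem | hmem
        · exact hv'notp (p.snd_mem_support_of_mem_edges hmem)
        · rcases hq v (q.fst_mem_support_of_mem_edges hmem) with h | h
          · exact h hv
          · exact hne h
  · rcases hbK with hbK | rfl
    · -- a = v, b off K
      obtain ⟨q, hq⟩ := nav_to_K hKcl hhole hb hbK ha hv
      apply keyfin
      apply reachable_avoidG (q.reverse.append p'.reverse)
      · intro z hz
        rw [Walk.mem_support_append_iff] at hz
        rcases hz with hz | hz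
        · rw [Walk.support_reverse, List.mem_reverse] at hz
          rcases hq z hz with h | h
          · exact Or.inl h
          · exact Or.inr (Or.inl h)
        · rw [Walk.support_reverse, List.mem_reverse] at hz
          rcases hp' z hz with h | h
          · exact Or.inl h
          · exact Or.inr (Or.inr h)
      · rw [Walk.edges_append]
        intro hmem
        rcases List.mem_append.mp hmem with hmem | hmem
        · rw [Walk.edges_reverse, List.mem_reverse] at hmem
          rcases hq v' (q.snd_mem_support_of_mem_edges hmem) with h | h
          · exact h hv'
          · exact hne h.symm
        · rw [Walk.edges_reverse, List.mem_reverse] at hmem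
          exact hvnotp' (p'.fst_mem_support_of_mem_edges hmem)
    · -- a = v, b = v'
      exact ⟨b, hv', u, c, hhole, hhole.2.2 a b ha hb (hKcl hv hv' hne)⟩

lemma dichotomy [Finite V] [DecidableEq V] {K : Set V}
    (hK : G.IsNonEdgeMaxClique K) (huniq : ∀ K', G.IsNonEdgeMaxClique K' → K' = K)
    {v x : V} (hv : v ∈ K)
    {u : V} {cH : G.Walk u u} (hhole : G.IsHole cH) (hx : x ∈ cH.support)
    {p : G.Walk v x} (hKav : G.IsKAvoidingPath K p) : TypeI G K v ∨ TypeII G K v := by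
  obtain ⟨hpath, hnot1, hsupp⟩ := hKav
  by_cases hxK : x ∉ K ∨ x = v
  · left
    refine ⟨u, cH, x, p, hhole, hx, ?_, hxK⟩
    intro z hz
    rcases hsupp z hz with rfl | rfl | h
    · exact Or.inr rfl
    · rcases hxK with h | h
      · exact Or.inl h
      · exact Or.inr h
    · exact Or.inl h
  · push_neg at hxK
    obtain ⟨hxKmem, hxv⟩ := hxK
    right
    have hvx : v ≠ x := fun h => hxv h.symm
    have hlen2 : 2 ≤ p.length := by
      have h0 : p.length ≠ 0 := fun h => hvx (Walk.eq_of_length_eq_zero h)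
      have h1 : p.length ≠ 1 := fun h => hnot1 ⟨h, hv, hxKmem⟩
      omega
    have hnedge : s(v, x) ∉ p.edges := end_edge_not_mem hpath hlen2
    have hreach : (avoidG G K v x).Reachable v x := by
      apply reachable_avoidG p _ hnedge
      intro z hz
      rcases hsupp z hz with rfl | rfl | h
      · exact Or.inr (Or.inl rfl)
      · exact Or.inr (Or.inr rfl)
      · exact Or.inl h
    obtain ⟨c₀, hhole₀, hedge₀⟩ := key_hole hK huniq hv hxKmem hvx hreach
    exact ⟨x, hxKmem, _, c₀, hhole₀, hedge₀⟩

def onE (z : V) (E : Set (Sym2 V)) : Prop := ∃ e ∈ E, z ∈ e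

end HoleProof

open HoleProof in
/-- **Lemma 3.** If a connected graph `G` with exactly `h` pairwise
edge-disjoint holes has exactly one non-edge maximal clique `K` of size `h + 1`, then
some vertex `v` of `K` satisfies: (a) there is no `K`-avoiding path from `v` to a vertex
of a hole, or (b) `v` is incident to an edge common to `K` and some hole, and `v` lies
on no other hole. -/
theorem exists_vertex_of_clique_satisfying_a_or_b
    {V : Type*} [Fintype V] (G : SimpleGraph V) (hconn : G.Connected)
    (h : ℕ) (hh : G.holeEdgeSets.ncard = h)
    (hdisj : G.HolesEdgeDisjoint) (K : Set V)
    (hK : G.IsNonEdgeMaxClique K)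
    (huniq : ∀ K', G.IsNonEdgeMaxClique K' → K' = K)
    (hKcard : K.ncard = h + 1) :
    ∃ v ∈ K,
      (¬ ∃ (u : V) (cH : G.Walk u u) (x : V) (_ : x ∈ cH.support) (p : G.Walk v x),
          G.IsHole cH ∧ G.IsKAvoidingPath K p) ∨
      (∃ (u : V) (cH : G.Walk u u) (w : V),
          G.IsHole cH ∧ w ∈ K ∧ s(v, w) ∈ cH.edges ∧
          ∀ (u' : V) (cH' : G.Walk u' u'), G.IsHole cH' → v ∈ cH'.support →
            (∀ e, e ∈ cH'.edges ↔ e ∈ cH.edges)) := by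
  classical
  by_contra hcon
  have hcon' : ∀ v ∈ K,
      (∃ (u : V) (cH : G.Walk u u) (x : V) (_ : x ∈ cH.support) (p : G.Walk v x),
        G.IsHole cH ∧ G.IsKAvoidingPath K p) ∧
      ¬(∃ (u : V) (cH : G.Walk u u) (w : V), G.IsHole cH ∧ w ∈ K ∧ s(v, w) ∈ cH.edges ∧
          ∀ (u' : V) (cH' : G.Walk u' u'), G.IsHole cH' → v ∈ cH'.support →
            (∀ e, e ∈ cH'.edges ↔ e ∈ cH.edges)) := by
    intro v hv
    constructor
    · by_contra hA
      exact hcon ⟨v, hv, Or.inl hA⟩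
    · intro hB
      exact hcon ⟨v, hv, Or.inr hB⟩
  have hdi : ∀ v ∈ K, TypeI G K v ∨ TypeII G K v := by
    intro v hv
    obtain ⟨⟨u, cH, x, hx, p, hhole, hKav⟩, -⟩ := hcon' v hv
    exact dichotomy hK huniq hv hhole hx hKav
  have onE_mem_support : ∀ (z u : V) (c : G.Walk u u), G.IsHole c →
      (onE z {e | e ∈ c.edges} ↔ z ∈ c.support) := by
    intro z u c hc
    constructor
    · rintro ⟨e, he, hze⟩
      exact mem_support_of_mem_edges' he hze
    · intro hz
      have hlen : c.length ≠ 0 := by have := hc.2.1; omega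
      obtain ⟨e, he, hze⟩ := exists_edge_of_mem_support c hlen hz
      exact ⟨e, he, hze⟩
  set H : Set (Set (Sym2 V)) := G.holeEdgeSets with hHdef
  set K2 : Set V := {v | v ∈ K ∧ TypeII G K v} with hK2def
  set K1 : Set V := K \ K2 with hK1def
  -- every TypeII vertex lies on two distinct holes
  have hK2two : ∀ v ∈ K2, ∃ E₁ E₂ : Set (Sym2 V), E₁ ∈ H ∧ E₂ ∈ H ∧ E₁ ≠ E₂ ∧
      onE v E₁ ∧ onE v E₂ := by
    intro v hv2
    obtain ⟨hvK, w, hwK, u, c, hhole, hedge⟩ := hv2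
    obtain ⟨-, hB⟩ := hcon' v hvK
    push_neg at hB
    have hB' := hB u c w hhole hwK hedge
    obtain ⟨u', cH', hhole', hvsupp', e₀, he₀⟩ := hB'
    refine ⟨{e | e ∈ c.edges}, {e | e ∈ cH'.edges}, ⟨u, c, hhole, rfl⟩,
      ⟨u', cH', hhole', rfl⟩, ?_, ⟨s(v, w), hedge, Sym2.mem_mk_left _ _⟩,
      (onE_mem_support v u' cH' hhole').mpr hvsupp'⟩
    intro hEeq
    have hiff := Set.ext_iff.mp hEeq e₀
    simp only [Set.mem_setOf_eq] at hiff
    rcases he₀ with ⟨hin, hnot⟩ | ⟨hnot, hin⟩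
    · exact hnot (hiff.mpr hin)
    · exact hnot (hiff.mp hin)
  -- private reach data for K1 vertices
  have hK1priv : ∀ v : V, ∃ E : Set (Sym2 V), v ∈ K1 →
      (E ∈ H ∧ ∃ (u : V) (c : G.Walk u u) (a : V) (p : G.Walk v a),
        G.IsHole c ∧ E = {e | e ∈ c.edges} ∧ a ∈ c.support ∧
        (∀ z ∈ p.support, z ∉ K ∨ z = v) ∧ (a ∉ K ∨ a = v)) := by
    intro v
    by_cases hv1 : v ∈ K1
    · have hvK : v ∈ K := hv1.1
      have hnot2 : ¬ TypeII G K v := fun ht => hv1.2 ⟨hvK, ht⟩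
      rcases hdi v hvK with h1 | h2
      · obtain ⟨u, c, a, p, hhole, ha, hp, haK⟩ := h1
        exact ⟨{e | e ∈ c.edges}, fun _ =>
          ⟨⟨u, c, hhole, rfl⟩, u, c, a, p, hhole, rfl, ha, hp, haK⟩⟩
      · exact absurd h2 hnot2
    · exact ⟨∅, fun hmem => absurd hmem hv1⟩
  choose f hf using hK1priv
  -- no other K vertex lies on the private hole of a K1 vertex
  have hC2 : ∀ v ∈ K1, ∀ z ∈ K, z ≠ v → ¬ onE z (f v) := by
    intro v hv1 z hzK hzv honEz
    obtain ⟨hfH, u, c, a, p, hhole, hEeq, ha, hp, haK⟩ := hf v hv1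
    rw [hEeq] at honEz
    have hzsupp : z ∈ c.support := (onE_mem_support z u c hhole).mp honEz
    have hT2 : TypeII G K v :=
      combine hK huniq hv1.1 hzK (fun hh' => hzv hh'.symm) hhole ha hzsupp hp haK
        (p' := Walk.nil) (fun y hy => Or.inr (Walk.mem_support_nil_iff.mp hy)) (Or.inr rfl)
    exact hv1.2 ⟨hv1.1, hT2⟩
  -- injectivity of the private hole assignment
  have hC3 : Set.InjOn f K1 := by
    intro v hv1 v' hv1' heq
    by_contra hne
    obtain ⟨hfH, u, c, a, p, hhole, hEeq, ha, hp, haK⟩ := hf v hv1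
    obtain ⟨hfH', u', c', a', p', hhole', hEeq', ha', hp', haK'⟩ := hf v' hv1'
    have ha'c : a' ∈ c.support := by
      have h1 : onE a' (f v') := by
        rw [hEeq']
        exact (onE_mem_support a' u' c' hhole').mpr ha'
      rw [← heq, hEeq] at h1
      exact (onE_mem_support a' u c hhole).mp h1
    have hT2 : TypeII G K v :=
      combine hK huniq hv1.1 hv1'.1 hne hhole ha ha'c hp haK hp' haK'
    exact hv1.2 ⟨hv1.1, hT2⟩
  -- counting
  have hHfin : H.Finite := Set.toFinite _
  set H2 : Set (Set (Sym2 V)) := {E | E ∈ H ∧ ∃ z ∈ K2, onE z E} with hH2def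
  set H1 : Set (Set (Sym2 V)) := H \ H2 with hH1def
  have hK1le : K1.ncard ≤ H1.ncard := by
    apply Set.ncard_le_ncard_of_injOn f _ hC3 (Set.toFinite _)
    intro v hv1
    refine ⟨(hf v hv1).1, ?_⟩
    rintro ⟨-, z, hz2, honEz⟩
    exact hC2 v hv1 z hz2.1 (fun hzv => hv1.2 (hzv ▸ hz2)) honEz
  set K2f := (Set.toFinite K2).toFinset with hK2f
  set H2f := (Set.toFinite H2).toFinset with hH2f
  have hcount : K2f.card ≤ H2f.card := by
    have hlow : ∀ z ∈ K2f, 2 ≤ (H2f.filter (fun E => onE z E)).card := by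
      intro z hz
      rw [Set.Finite.mem_toFinset] at hz
      obtain ⟨E₁, E₂, h1, h2, hEne, o1, o2⟩ := hK2two z hz
      have hE1 : E₁ ∈ H2f.filter (fun E => onE z E) := by
        rw [Finset.mem_filter, Set.Finite.mem_toFinset]
        exact ⟨⟨h1, z, hz, o1⟩, o1⟩
      have hE2 : E₂ ∈ H2f.filter (fun E => onE z E) := by
        rw [Finset.mem_filter, Set.Finite.mem_toFinset]
        exact ⟨⟨h2, z, hz, o2⟩, o2⟩
      exact Finset.one_lt_card.mpr ⟨E₁, hE1, E₂, hE2, hEne⟩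
    have hup : ∀ E ∈ H2f, (K2f.filter (fun z => onE z E)).card ≤ 2 := by
      intro E hE
      rw [Set.Finite.mem_toFinset] at hE
      obtain ⟨hEH, -⟩ := hE
      obtain ⟨u, c, hhole, rfl⟩ := hEH
      by_contra hgt
      push_neg at hgt
      rw [Finset.two_lt_card_iff] at hgt
      obtain ⟨z₁, z₂, z₃, hz1, hz2, hz3, h12, h13, h23⟩ := hgt
      rw [Finset.mem_filter, Set.Finite.mem_toFinset] at hz1 hz2 hz3
      have hs1 : z₁ ∈ c.support := (onE_mem_support z₁ u c hhole).mp hz1.2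
      have hs2 : z₂ ∈ c.support := (onE_mem_support z₂ u c hhole).mp hz2.2
      have hs3 : z₃ ∈ c.support := (onE_mem_support z₃ u c hhole).mp hz3.2
      have hcl : G.IsClique K := hK.1.1
      exact no_triangle hhole.1 hhole.2.1 hs1 h12 h13 h23
        (hhole.2.2 z₁ z₂ hs1 hs2 (hcl hz1.1.1 hz2.1.1 h12))
        (hhole.2.2 z₁ z₃ hs1 hs3 (hcl hz1.1.1 hz3.1.1 h13))
        (hhole.2.2 z₂ z₃ hs2 hs3 (hcl hz2.1.1 hz3.1.1 h23))
    have hswap : ∑ z ∈ K2f, (H2f.filter (fun E => onE z E)).card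
        = ∑ E ∈ H2f, (K2f.filter (fun z => onE z E)).card := by
      simp_rw [Finset.card_filter]
      exact Finset.sum_comm
    have hlb := Finset.card_nsmul_le_sum K2f (fun z => (H2f.filter (fun E => onE z E)).card) 2 hlow
    have hub := Finset.sum_le_card_nsmul H2f (fun E => (K2f.filter (fun z => onE z E)).card) 2 hup
    rw [hswap] at hlb
    simp only [smul_eq_mul] at hlb hub
    omega
  have hK2le : K2.ncard ≤ H2.ncard := by
    rw [Set.ncard_eq_toFinset_card K2 (Set.toFinite K2),
      Set.ncard_eq_toFinset_card H2 (Set.toFinite H2)]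
    exact hcount
  have hsplitH : H1.ncard + H2.ncard = H.ncard := by
    rw [hH1def, add_comm]
    rw [← Set.ncard_diff_add_ncard_of_subset (fun E hE => hE.1 : H2 ⊆ H) hHfin]
    omega
  have hsplitK : K1.ncard + K2.ncard = K.ncard := by
    rw [hK1def, add_comm]
    rw [← Set.ncard_diff_add_ncard_of_subset (fun z hz => hz.1 : K2 ⊆ K) (Set.toFinite K)]
    omega
  have hHcard : H.ncard = h := hh
  omega
end

section
/- Let G be a connected graph with exactly h holes such that all holes of G are pairwise edge-disjoint and G has exactly one non-edge maximal clique K, and let H be a hole of G. If, for some edge e of H, the graph G − e (obtained by deleting the edge e) has at least h holes, then e is an edge of K. -/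
open SimpleGraph

namespace HoleAux

open SimpleGraph

variable {V : Type*}

lemma not_mem_edgeSet_deleteEdges (G : SimpleGraph V) (e : Sym2 V) :
    e ∉ (G.deleteEdges {e}).edgeSet := by
  induction e using Sym2.ind with
  | _ a b =>
    rw [SimpleGraph.mem_edgeSet, SimpleGraph.deleteEdges_adj]
    rintro ⟨-, h2⟩
    exact h2 rfl

lemma mem_edge_of_length_one {G : SimpleGraph V} {a b : V} (p : G.Walk a b)
    (h : p.length = 1) : s(a, b) ∈ p.edges := by
  cases p with
  | nil => simp at h
  | cons hadj q =>
    cases q with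
    | nil => simp
    | cons _ _ => simp [SimpleGraph.Walk.length_cons] at h

lemma exists_mid_of_length_two {G : SimpleGraph V} {a b : V} (p : G.Walk a b)
    (h : p.length = 2) : ∃ z, G.Adj a z ∧ G.Adj z b := by
  cases p with
  | nil => simp at h
  | cons hadj q =>
    cases q with
    | nil => simp at h
    | cons hadj2 r =>
      cases r with
      | nil => exact ⟨_, hadj, hadj2⟩
      | cons _ _ => simp [SimpleGraph.Walk.length_cons] at h

lemma mem_support_tail_iff {G : SimpleGraph V} {v a : V} (c : G.Walk v v)
    (hc : c ≠ SimpleGraph.Walk.nil) : a ∈ c.support.tail ↔ a ∈ c.support := by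
  cases c with
  | nil => exact absurd rfl hc
  | cons h q =>
    simp only [SimpleGraph.Walk.support_cons, List.tail_cons, List.mem_cons]
    constructor
    · exact Or.inr
    · rintro (rfl | h')
      · exact q.end_mem_support
      · exact h'

lemma exists_maxClique [Fintype V] (G : SimpleGraph V) (s : Set V) (hs : G.IsClique s) :
    ∃ K, G.IsMaxClique K ∧ s ⊆ K := by
  obtain ⟨K, ⟨hK, hsK⟩, hmax⟩ := Set.Finite.exists_maximalFor (fun t : Set V => t.ncard)
    {t : Set V | G.IsClique t ∧ s ⊆ t} (Set.toFinite _) ⟨s, hs, subset_rfl⟩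
  refine ⟨K, ⟨hK, fun K' hK' hKK' => ?_⟩, hsK⟩
  have h1 : K.ncard = K'.ncard :=
    le_antisymm (Set.ncard_le_ncard hKK' (Set.toFinite _))
      (hmax ⟨hK', hsK.trans hKK'⟩ (Set.ncard_le_ncard hKK' (Set.toFinite _)))
  exact (Set.eq_of_subset_of_ncard_le hKK' h1.ge (Set.toFinite _)).symm

lemma final_step [Fintype V] {G : SimpleGraph V} {K : Set V}
    (huniq : ∀ K', G.IsNonEdgeMaxClique K' → K' = K)
    {x y z : V} (hxy : G.Adj x y) (hxz : G.Adj x z) (hzy : G.Adj z y) :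
    x ∈ K ∧ y ∈ K := by
  have hclique : G.IsClique {x, y, z} := by
    rw [SimpleGraph.isClique_iff]
    intro a ha b hb hab
    simp only [Set.mem_insert_iff, Set.mem_singleton_iff] at ha hb
    rcases ha with rfl | rfl | rfl <;> rcases hb with rfl | rfl | rfl <;>
      first
        | exact absurd rfl hab
        | assumption
        | exact hxy.symm
        | exact hxz.symm
        | exact hzy.symm
        | exact hzy
  obtain ⟨K', hK', hsub⟩ := exists_maxClique G {x, y, z} hclique
  have h3 : 3 ≤ K'.ncard := by
    have hcard : ({x, y, z} : Set V).ncard = 3 :=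
      Set.ncard_eq_three.mpr ⟨x, y, z, hxy.ne, hxz.ne, (hzy.ne).symm, rfl⟩
    calc 3 = ({x, y, z} : Set V).ncard := hcard.symm
      _ ≤ K'.ncard := Set.ncard_le_ncard hsub (Set.toFinite _)
  have hKK : K' = K := huniq K' ⟨hK', h3⟩
  rw [← hKK]
  exact ⟨hsub (by simp), hsub (by simp)⟩

end HoleAux

/-- **Lemma 4, first part.** Let `G` be a connected graph with exactly `h`
pairwise edge-disjoint holes and exactly one non-edge maximal clique `K`, and let `H` be
a hole of `G`. If deleting an edge `e` of `H` leaves at least `h` holes, then `e` is an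
edge of `K`. -/
theorem edge_of_clique_of_deleteEdge_has_many_holes
    {V : Type*} [Fintype V] (G : SimpleGraph V) (hconn : G.Connected)
    (h : ℕ) (hh : G.holeEdgeSets.ncard = h)
    (hdisj : G.HolesEdgeDisjoint) (K : Set V)
    (hK : G.IsNonEdgeMaxClique K)
    (huniq : ∀ K', G.IsNonEdgeMaxClique K' → K' = K)
    {u : V} (cH : G.Walk u u) (hHole : G.IsHole cH)
    (e : Sym2 V) (he : e ∈ cH.edges)
    (hmany : h ≤ ((G.deleteEdges {e}).holeEdgeSets).ncard) :
    ∃ x y, x ∈ K ∧ y ∈ K ∧ e = s(x, y) := by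
  classical
  have heG' : e ∉ (G.deleteEdges {e}).edgeSet := HoleAux.not_mem_edgeSet_deleteEdges G e
  have hEH : {f | f ∈ cH.edges} ∈ G.holeEdgeSets := ⟨u, cH, hHole, rfl⟩
  -- Step 1: find a hole of G − e whose edge set is not the edge set of a hole of G.
  have hnotsub :
      ¬ ((G.deleteEdges {e}).holeEdgeSets ⊆ G.holeEdgeSets \ {{f | f ∈ cH.edges}}) := by
    intro hsub
    have hle := Set.ncard_le_ncard hsub (Set.toFinite _)
    rw [Set.ncard_diff_singleton_of_mem hEH, hh] at hle
    have hpos : 0 < h := by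
      rw [← hh]
      exact (Set.ncard_pos (Set.toFinite _)).2 ⟨_, hEH⟩
    omega
  rw [Set.not_subset] at hnotsub
  obtain ⟨E, hEmem, hEnot⟩ := hnotsub
  obtain ⟨v, c', hc', rfl⟩ := hEmem
  have hc'_edges_ne : ∀ f ∈ c'.edges, f ≠ e := fun f hf hfe =>
    heG' (hfe ▸ c'.edges_subset_edgeSet hf)
  have hEnotG : {f | f ∈ c'.edges} ∉ G.holeEdgeSets := by
    intro hA
    apply hEnot
    refine ⟨hA, ?_⟩
    simp only [Set.mem_singleton_iff]
    intro hEq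
    have he' : e ∈ c'.edges := by
      have h1 : e ∈ ({f | f ∈ cH.edges} : Set (Sym2 V)) := he
      rw [← hEq] at h1
      exact h1
    exact hc'_edges_ne e he' rfl
  -- Step 2: transfer c' to G.
  have hsubE : ∀ f ∈ c'.edges, f ∈ G.edgeSet := fun f hf =>
    SimpleGraph.edgeSet_mono (SimpleGraph.deleteEdges_le _) (c'.edges_subset_edgeSet hf)
  set cG : G.Walk v v := c'.transfer G hsubE with hcGdef
  have hcGedges : cG.edges = c'.edges := c'.edges_transfer hsubE
  have hcGsupp : cG.support = c'.support := c'.support_transfer hsubE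
  have hcGcyc : cG.IsCycle := hc'.1.transfer hsubE
  have hcGlen : cG.length = c'.length := by
    rw [← SimpleGraph.Walk.length_edges, hcGedges, SimpleGraph.Walk.length_edges]
  have hcGnothole : ¬ G.IsHole cG := by
    intro hhole
    exact hEnotG ⟨v, cG, hhole, by rw [hcGedges]⟩
  -- Step 3: cG has a chord, which must be e.
  obtain ⟨x, y, hxs, hys, hadjxy, hnotedge⟩ :
      ∃ x y, x ∈ cG.support ∧ y ∈ cG.support ∧ G.Adj x y ∧ s(x, y) ∉ cG.edges := by
    by_contra hcon
    push_neg at hcon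
    exact hcGnothole ⟨hcGcyc, by rw [hcGlen]; exact hc'.2.1,
      fun a b ha hb hab => hcon a b ha hb hab⟩
  have hxyne : x ≠ y := hadjxy.ne
  have hse : s(x, y) = e := by
    by_contra hne
    have hadj' : (G.deleteEdges {e}).Adj x y := by
      rw [SimpleGraph.deleteEdges_adj]
      exact ⟨hadjxy, fun hmem => hne (by simpa using hmem)⟩
    have hm := hc'.2.2 x y (hcGsupp ▸ hxs) (hcGsupp ▸ hys) hadj'
    exact hnotedge (by rw [hcGedges]; exact hm)
  -- Step 4: rotate cG to start at x.
  set c : G.Walk x x := cG.rotate x hxs with hcdef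
  have hccyc : c.IsCycle := hcGcyc.rotate hxs
  have hcedges_perm : c.edges ~r cG.edges := cG.rotate_edges x hxs
  have hcedge_iff : ∀ f, f ∈ c.edges ↔ f ∈ cG.edges := fun f => hcedges_perm.mem_iff
  have hclen : c.length = cG.length := by
    have hlp := hcedges_perm.perm.length_eq
    rwa [SimpleGraph.Walk.length_edges, SimpleGraph.Walk.length_edges] at hlp
  have hcsupp_iff : ∀ a, a ∈ c.support ↔ a ∈ cG.support := fun a => by
    rw [← HoleAux.mem_support_tail_iff c hccyc.ne_nil,
        ← HoleAux.mem_support_tail_iff cG hcGcyc.ne_nil]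
    exact (SimpleGraph.Walk.support_rotate cG x hxs).mem_iff
  have henc : e ∉ c.edges := fun hf =>
    hc'_edges_ne e (hcGedges ▸ (hcedge_iff e).1 hf) rfl
  have hy' : y ∈ c.support := (hcsupp_iff y).2 hys
  -- Step 5: split c at y.
  set p : G.Walk x y := c.takeUntil y hy' with hpdef
  set q : G.Walk y x := c.dropUntil y hy' with hqdef
  have hspec : p.append q = c := c.take_spec hy'
  have hcsupp : c.support = p.support ++ q.support.tail := by
    conv_lhs => rw [← hspec]
    exact SimpleGraph.Walk.support_append p q
  have hcedges : c.edges = p.edges ++ q.edges := by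
    conv_lhs => rw [← hspec]
    exact SimpleGraph.Walk.edges_append p q
  have hclen_split : c.length = p.length + q.length := by
    conv_lhs => rw [← hspec]
    exact SimpleGraph.Walk.length_append p q
  have hctail : c.support.tail = p.support.tail ++ q.support.tail := by
    rw [hcsupp, SimpleGraph.Walk.support_eq_cons p]
    rfl
  have hnd : (p.support.tail ++ q.support.tail).Nodup := hctail ▸ hccyc.support_nodup
  rw [List.nodup_append] at hnd
  obtain ⟨hndp, hndq, hdisj'⟩ := hnd
  have hyinp : y ∈ p.support.tail := by
    have hm : y ∈ p.support := p.end_mem_support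
    rw [SimpleGraph.Walk.support_eq_cons p, List.mem_cons] at hm
    rcases hm with h' | h'
    · exact absurd h'.symm hxyne
    · exact h'
  have hxinq : x ∈ q.support.tail := by
    have hm : x ∈ q.support := q.end_mem_support
    rw [SimpleGraph.Walk.support_eq_cons q, List.mem_cons] at hm
    rcases hm with h' | h'
    · exact absurd h' hxyne
    · exact h'
  have hppath : p.IsPath := by
    rw [SimpleGraph.Walk.isPath_def, SimpleGraph.Walk.support_eq_cons p]
    exact List.nodup_cons.2 ⟨fun hx2 => hdisj' x hx2 x hxinq rfl, hndp⟩
  have hqpath : q.IsPath := by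
    rw [SimpleGraph.Walk.isPath_def, SimpleGraph.Walk.support_eq_cons q]
    exact List.nodup_cons.2 ⟨fun hy2 => hdisj' y hyinp y hy2 rfl, hndq⟩
  have hmeet : ∀ a, a ∈ p.support → a ∈ q.support → a = x ∨ a = y := by
    intro a hap haq
    rw [SimpleGraph.Walk.support_eq_cons p, List.mem_cons] at hap
    rw [SimpleGraph.Walk.support_eq_cons q, List.mem_cons] at haq
    rcases hap with rfl | hap
    · exact Or.inl rfl
    rcases haq with rfl | haq
    · exact Or.inr rfl
    exact absurd haq (fun h' => hdisj' a hap a h' rfl)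
  have hpsub : p.support ⊆ c.support := SimpleGraph.Walk.support_takeUntil_subset c hy'
  have hqsub : q.support ⊆ c.support := SimpleGraph.Walk.support_dropUntil_subset c hy'
  -- lengths
  have hlen4 : 4 ≤ c.length := by rw [hclen, hcGlen]; exact hc'.2.1
  have hp2 : 2 ≤ p.length := by
    rcases Nat.lt_or_ge p.length 2 with hlt | hge
    · exfalso
      rcases Nat.lt_or_ge p.length 1 with hlt1 | hge1
      · have h0 : p.length = 0 := by omega
        exact hxyne (SimpleGraph.Walk.eq_of_length_eq_zero h0)
      · have h1 : p.length = 1 := by omega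
        have hm := HoleAux.mem_edge_of_length_one p h1
        rw [hse] at hm
        exact henc (by rw [hcedges]; exact List.mem_append_left _ hm)
    · exact hge
  have hq2 : 2 ≤ q.length := by
    rcases Nat.lt_or_ge q.length 2 with hlt | hge
    · exfalso
      rcases Nat.lt_or_ge q.length 1 with hlt1 | hge1
      · have h0 : q.length = 0 := by omega
        exact hxyne (SimpleGraph.Walk.eq_of_length_eq_zero h0).symm
      · have h1 : q.length = 1 := by omega
        have hm := HoleAux.mem_edge_of_length_one q h1
        rw [Sym2.eq_swap, hse] at hm
        exact henc (by rw [hcedges]; exact List.mem_append_right _ hm)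
    · exact hge
  -- chordal membership helper
  have hchord : ∀ a b, a ∈ c.support → b ∈ c.support → G.Adj a b →
      s(a, b) = e ∨ s(a, b) ∈ c.edges := by
    intro a b ha hb hab
    by_cases habe : s(a, b) = e
    · exact Or.inl habe
    · refine Or.inr ?_
      have hadj' : (G.deleteEdges {e}).Adj a b := by
        rw [SimpleGraph.deleteEdges_adj]
        exact ⟨hab, fun hmem => habe (by simpa using hmem)⟩
      have hm := hc'.2.2 a b (hcGsupp ▸ (hcsupp_iff a).1 ha)
        (hcGsupp ▸ (hcsupp_iff b).1 hb) hadj'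
      exact (hcedge_iff _).2 (by rw [hcGedges]; exact hm)
  -- Step 6: the two candidate holes.
  have hC1 : 3 ≤ p.length → G.IsHole (SimpleGraph.Walk.cons hadjxy.symm p) := by
    intro hp3
    refine ⟨?_, ?_, ?_⟩
    · rw [SimpleGraph.Walk.cons_isCycle_iff]
      refine ⟨hppath, fun hmem => ?_⟩
      rw [Sym2.eq_swap, hse] at hmem
      exact henc (by rw [hcedges]; exact List.mem_append_left _ hmem)
    · rw [SimpleGraph.Walk.length_cons]; omega
    · intro a b ha hb hab
      rw [SimpleGraph.Walk.support_cons, List.mem_cons] at ha hb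
      have ha' : a ∈ p.support := by
        rcases ha with rfl | ha
        · exact p.end_mem_support
        · exact ha
      have hb' : b ∈ p.support := by
        rcases hb with rfl | hb
        · exact p.end_mem_support
        · exact hb
      rcases hchord a b (hpsub ha') (hpsub hb') hab with habe | hmc
      · rw [SimpleGraph.Walk.edges_cons, List.mem_cons]
        exact Or.inl (by rw [habe, ← hse, Sym2.eq_swap])
      · rw [hcedges, List.mem_append] at hmc
        rcases hmc with hmp | hmq
        · rw [SimpleGraph.Walk.edges_cons]
          exact List.mem_cons_of_mem _ hmp
        · exfalso
          have haq : a ∈ q.support := q.fst_mem_support_of_mem_edges hmq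
          have hbq : b ∈ q.support := q.snd_mem_support_of_mem_edges hmq
          have habe : s(a, b) = e := by
            rw [← hse]
            rcases hmeet a ha' haq with rfl | rfl <;> rcases hmeet b hb' hbq with rfl | rfl
            · exact absurd rfl hab.ne
            · rfl
            · exact Sym2.eq_swap
            · exact absurd rfl hab.ne
          exact henc (habe ▸ (by rw [hcedges]; exact List.mem_append_right _ hmq))
  have hC2 : 3 ≤ q.length → G.IsHole (SimpleGraph.Walk.cons hadjxy q) := by
    intro hq3
    refine ⟨?_, ?_, ?_⟩
    · rw [SimpleGraph.Walk.cons_isCycle_iff]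
      refine ⟨hqpath, fun hmem => ?_⟩
      rw [hse] at hmem
      exact henc (by rw [hcedges]; exact List.mem_append_right _ hmem)
    · rw [SimpleGraph.Walk.length_cons]; omega
    · intro a b ha hb hab
      rw [SimpleGraph.Walk.support_cons, List.mem_cons] at ha hb
      have ha' : a ∈ q.support := by
        rcases ha with rfl | ha
        · exact q.end_mem_support
        · exact ha
      have hb' : b ∈ q.support := by
        rcases hb with rfl | hb
        · exact q.end_mem_support
        · exact hb
      rcases hchord a b (hqsub ha') (hqsub hb') hab with habe | hmc
      · rw [SimpleGraph.Walk.edges_cons, List.mem_cons]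
        exact Or.inl (by rw [habe, ← hse])
      · rw [hcedges, List.mem_append] at hmc
        rcases hmc with hmp | hmq
        · exfalso
          have hap : a ∈ p.support := p.fst_mem_support_of_mem_edges hmp
          have hbp : b ∈ p.support := p.snd_mem_support_of_mem_edges hmp
          have habe : s(a, b) = e := by
            rw [← hse]
            rcases hmeet a hap ha' with rfl | rfl <;> rcases hmeet b hbp hb' with rfl | rfl
            · exact absurd rfl hab.ne
            · rfl
            · exact Sym2.eq_swap
            · exact absurd rfl hab.ne
          exact henc (habe ▸ (by rw [hcedges]; exact List.mem_append_left _ hmp))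
        · rw [SimpleGraph.Walk.edges_cons]
          exact List.mem_cons_of_mem _ hmq
  -- Step 7: not both sides can be long.
  by_cases hp3 : 3 ≤ p.length
  · by_cases hq3 : 3 ≤ q.length
    · exfalso
      have h1 := hC1 hp3
      have h2 := hC2 hq3
      have heC1 : e ∈ (SimpleGraph.Walk.cons hadjxy.symm p).edges := by
        rw [SimpleGraph.Walk.edges_cons, List.mem_cons]
        exact Or.inl (by rw [← hse, Sym2.eq_swap])
      have heC2 : e ∈ (SimpleGraph.Walk.cons hadjxy q).edges := by
        rw [SimpleGraph.Walk.edges_cons, List.mem_cons]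
        exact Or.inl hse.symm
      rcases hdisj _ _ h1 h2 with hsame | hdje
      · have hpne : p.edges ≠ [] := by
          intro h0
          have hl := congrArg List.length h0
          rw [SimpleGraph.Walk.length_edges] at hl
          simp only [List.length_nil] at hl
          omega
        obtain ⟨f, hf⟩ := List.exists_mem_of_ne_nil _ hpne
        have hf2 := (hsame f).1 (List.mem_cons_of_mem _ hf)
        rw [SimpleGraph.Walk.edges_cons, List.mem_cons] at hf2
        rcases hf2 with hfe | hfq
        · rw [hfe, hse] at hf
          exact henc (by rw [hcedges]; exact List.mem_append_left _ hf)
        · have hnodup : (p.edges ++ q.edges).Nodup := by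
            rw [← hcedges]
            exact hccyc.isCircuit.isTrail.edges_nodup
          exact (List.disjoint_of_nodup_append hnodup) hf hfq
      · exact hdje e heC1 heC2
    · have hq2' : q.length = 2 := by omega
      obtain ⟨z, hyz, hzx⟩ := HoleAux.exists_mid_of_length_two q hq2'
      obtain ⟨hxK, hyK⟩ := HoleAux.final_step huniq hadjxy hzx.symm hyz.symm
      exact ⟨x, y, hxK, hyK, hse.symm⟩
  · have hp2' : p.length = 2 := by omega
    obtain ⟨z, hxz, hzy⟩ := HoleAux.exists_mid_of_length_two p hp2'
    obtain ⟨hxK, hyK⟩ := HoleAux.final_step huniq hadjxy hxz hzy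
    exact ⟨x, y, hxK, hyK, hse.symm⟩
end

section
/- Let G be a connected graph with exactly h holes such that all holes of G are pairwise edge-disjoint and G has exactly one non-edge maximal clique K, let H be a hole of G, and let e = v_i v_j be an edge of H such that G − e has at least h holes. Then every hole of G − e that is not a hole of G is the cycle obtained from H by replacing the edge v_i v_j with the two edges v_i v_k and v_j v_k for some vertex v_k of K. -/
open SimpleGraph

lemma mem_support_rotate' {V : Type*} [DecidableEq V] {G : SimpleGraph V} {u v : V}
    (c : G.Walk v v) (h : u ∈ c.support) (x : V) :
    x ∈ (c.rotate u h).support ↔ x ∈ c.support := by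
  rw [show c.rotate u h = (c.dropUntil u h).append (c.takeUntil u h) from rfl,
    Walk.mem_support_append_iff]
  conv_rhs => rw [← Walk.take_spec c h]
  rw [Walk.mem_support_append_iff]
  tauto

lemma exists_maxClique_superset {V : Type*} [Fintype V] (G : SimpleGraph V) (T : Set V)
    (hT : G.IsClique T) : ∃ K, G.IsMaxClique K ∧ T ⊆ K := by
  classical
  have hfin : {K' : Set V | G.IsClique K' ∧ T ⊆ K'}.Finite := Set.toFinite _
  have hne : {K' : Set V | G.IsClique K' ∧ T ⊆ K'}.Nonempty := ⟨T, hT, subset_rfl⟩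
  obtain ⟨K, hK, hmax⟩ := Set.Finite.exists_maximalFor id _ hfin hne
  refine ⟨K, ⟨hK.1, fun K' hK' hsub => ?_⟩, hK.2⟩
  exact le_antisymm (hmax ⟨hK', hK.2.trans hsub⟩ hsub) hsub

lemma triangle_in_K {V : Type*} [Fintype V] {G : SimpleGraph V} {K : Set V}
    (huniq : ∀ K', G.IsNonEdgeMaxClique K' → K' = K)
    {a b c : V} (hab : G.Adj a b) (hac : G.Adj a c) (hbc : G.Adj b c) :
    a ∈ K ∧ b ∈ K ∧ c ∈ K := by
  classical
  have hclique : G.IsClique {a, b, c} := by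
    intro x hx y hy hne
    simp only [Set.mem_insert_iff, Set.mem_singleton_iff] at hx hy
    rcases hx with rfl | rfl | rfl <;> rcases hy with rfl | rfl | rfl <;>
      first | exact absurd rfl hne | assumption | exact hab.symm | exact hac.symm | exact hbc.symm
  obtain ⟨K₀, hmax, hsub⟩ := exists_maxClique_superset G _ hclique
  have hcard : 3 ≤ K₀.ncard := by
    have h3 : ({a, b, c} : Set V).ncard = 3 :=
      Set.ncard_eq_three.2 ⟨a, b, c, hab.ne, hac.ne, hbc.ne, rfl⟩
    calc 3 = ({a, b, c} : Set V).ncard := h3.symm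
      _ ≤ K₀.ncard := Set.ncard_le_ncard hsub (Set.toFinite _)
  have hKeq : K₀ = K := huniq K₀ ⟨hmax, hcard⟩
  subst hKeq
  exact ⟨hsub (by simp), hsub (by simp), hsub (by simp)⟩

lemma walk_length_two {V : Type*} {G : SimpleGraph V} {a b : V} (p : G.Walk a b)
    (h : p.length = 2) :
    ∃ m, G.Adj a m ∧ G.Adj m b ∧ p.edges = [s(a, m), s(m, b)] := by
  cases p with
  | nil => simp at h
  | cons h1 q =>
    cases q with
    | nil => simp at h
    | cons h2 r =>
      cases r with
      | nil => exact ⟨_, h1, h2, rfl⟩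
      | cons h3 s => simp [Walk.length_cons] at h

lemma hole_from_path {V : Type*} {G : SimpleGraph V} {vi vj : V}
    (hGadj : G.Adj vi vj) (Q : (G.deleteEdges {s(vi, vj)}).Walk vj vi)
    (hQ : Q.IsPath) (hlen : 3 ≤ Q.length)
    (hchord : ∀ x y, x ∈ Q.support → y ∈ Q.support →
      (G.deleteEdges {s(vi, vj)}).Adj x y → s(x, y) ∈ Q.edges) :
    ∃ C : G.Walk vi vi, G.IsHole C ∧ ∀ f, f ∈ C.edges ↔ f = s(vi, vj) ∨ f ∈ Q.edges := by
  have hsub : ∀ f ∈ Q.edges, f ∈ G.edgeSet := fun f hf =>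
    (edgeSet_mono (G.deleteEdges_le _)) (Q.edges_subset_edgeSet hf)
  have heQ : s(vi, vj) ∉ Q.edges := by
    intro hmem
    have := Q.edges_subset_edgeSet hmem
    rw [mem_edgeSet, deleteEdges_adj] at this
    exact this.2 (by simp)
  refine ⟨Walk.cons hGadj (Q.transfer G hsub), ⟨?_, ?_, ?_⟩, ?_⟩
  · rw [Walk.cons_isCycle_iff]
    refine ⟨hQ.transfer hsub, ?_⟩
    rw [Walk.edges_transfer]
    exact heQ
  · rw [Walk.length_cons, Walk.length_transfer]
    omega
  · intro x y hx hy hadj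
    rw [Walk.support_cons, Walk.support_transfer] at hx hy
    have hxQ : x ∈ Q.support := by
      rcases List.mem_cons.1 hx with rfl | h
      · exact Q.end_mem_support
      · exact h
    have hyQ : y ∈ Q.support := by
      rcases List.mem_cons.1 hy with rfl | h
      · exact Q.end_mem_support
      · exact h
    by_cases hcase : s(x, y) = s(vi, vj)
    · rw [hcase]
      simp [Walk.edges_cons]
    · have : (G.deleteEdges {s(vi, vj)}).Adj x y := by
        rw [deleteEdges_adj]
        exact ⟨hadj, by simpa using hcase⟩
      have := hchord x y hxQ hyQ this
      simp [Walk.edges_cons, Walk.edges_transfer, this]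
  · intro f
    simp [Walk.edges_cons, Walk.edges_transfer]

lemma two_le_walk_length {V : Type*} {G : SimpleGraph V} {a b : V} (p : G.Walk a b)
    (hne : a ≠ b) (hnadj : ¬ G.Adj a b) : 2 ≤ p.length := by
  by_contra h
  push_neg at h
  rcases (show p.length = 0 ∨ p.length = 1 by omega) with h' | h'
  · exact hne (Walk.eq_of_length_eq_zero h')
  · exact hnadj (Walk.adj_of_length_eq_one h')


/-- **Lemma 4, second part.** With the hypotheses of Lemma 4 and
`e = s(vᵢ, vⱼ)`, every hole of `G - e` which is not a hole of `G` is obtained from `H`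
by replacing the edge `vᵢvⱼ` with the two edges `vᵢvₖ` and `vⱼvₖ` for some vertex
`vₖ` of `K`. -/
theorem new_holes_after_deleteEdge_description
    {V : Type*} [Fintype V] (G : SimpleGraph V) (hconn : G.Connected)
    (h : ℕ) (hh : G.holeEdgeSets.ncard = h)
    (hdisj : G.HolesEdgeDisjoint) (K : Set V)
    (hK : G.IsNonEdgeMaxClique K)
    (huniq : ∀ K', G.IsNonEdgeMaxClique K' → K' = K)
    {u : V} (cH : G.Walk u u) (hHole : G.IsHole cH)
    (vi vj : V) (he : s(vi, vj) ∈ cH.edges)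
    (hmany : h ≤ ((G.deleteEdges {s(vi, vj)}).holeEdgeSets).ncard) :
    ∀ (w : V) (c' : (G.deleteEdges {s(vi, vj)}).Walk w w),
      (G.deleteEdges {s(vi, vj)}).IsHole c' →
      {e | e ∈ c'.edges} ∉ G.holeEdgeSets →
      ∃ vk ∈ K, ∀ f, f ∈ c'.edges ↔
        ((f ∈ cH.edges ∧ f ≠ s(vi, vj)) ∨ f = s(vi, vk) ∨ f = s(vj, vk)) := by
  classical
  intro w c' hc' hnotG
  have hGadj : G.Adj vi vj := cH.adj_of_mem_edges he
  have hne_ij : vi ≠ vj := hGadj.ne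
  have heGd : ∀ {a b : V} (p : (G.deleteEdges {s(vi, vj)}).Walk a b), s(vi, vj) ∉ p.edges := by
    intro a b p hmem
    have := p.edges_subset_edgeSet hmem
    rw [mem_edgeSet, deleteEdges_adj] at this
    exact this.2 (by simp)
  have hnoGd : ¬ (G.deleteEdges {s(vi, vj)}).Adj vi vj := by
    rw [deleteEdges_adj]
    rintro ⟨-, h2⟩
    exact h2 (by simp)
  -- Step 1: vi and vj are both on c'
  have hsubG : ∀ f ∈ c'.edges, f ∈ G.edgeSet := fun f hf =>
    (edgeSet_mono (G.deleteEdges_le _)) (c'.edges_subset_edgeSet hf)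
  have hmem : vi ∈ c'.support ∧ vj ∈ c'.support := by
    by_contra hcon
    apply hnotG
    refine ⟨w, c'.transfer G hsubG, ⟨hc'.1.transfer hsubG, ?_, ?_⟩, by rw [Walk.edges_transfer]⟩
    · rw [Walk.length_transfer]; exact hc'.2.1
    · intro x y hx hy hadj
      rw [Walk.support_transfer] at hx hy
      rw [Walk.edges_transfer]
      by_cases hcase : s(x, y) = s(vi, vj)
      · exfalso
        rcases Sym2.eq_iff.1 hcase with ⟨rfl, rfl⟩ | ⟨rfl, rfl⟩
        · exact hcon ⟨hx, hy⟩
        · exact hcon ⟨hy, hx⟩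
      · refine hc'.2.2 x y hx hy ?_
        rw [deleteEdges_adj]
        exact ⟨hadj, by simpa using hcase⟩
  obtain ⟨hvi', hvj'⟩ := hmem
  -- Step 2: rotate c' to start at vi
  set c2 := c'.rotate vi hvi' with hc2def
  have hperm : List.Perm c2.edges c'.edges := (c'.rotate_edges vi hvi').perm
  have hmemsup : ∀ x, x ∈ c2.support ↔ x ∈ c'.support := mem_support_rotate' c' hvi'
  have hc2cyc : c2.IsCycle := hc'.1.rotate hvi'
  have hc2 : (G.deleteEdges {s(vi, vj)}).IsHole c2 := by
    refine ⟨hc2cyc, ?_, ?_⟩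
    · have hl := hperm.length_eq
      rw [Walk.length_edges, Walk.length_edges] at hl
      rw [hl]; exact hc'.2.1
    · intro x y hx hy hadj
      exact hperm.mem_iff.2 (hc'.2.2 x y ((hmemsup x).1 hx) ((hmemsup y).1 hy) hadj)
  have hvj2 : vj ∈ c2.support := (hmemsup vj).2 hvj'
  -- Step 3: split at vj
  set P1 := c2.takeUntil vj hvj2 with hP1def
  set P2 := c2.dropUntil vj hvj2 with hP2def
  have hspec : P1.append P2 = c2 := c2.take_spec hvj2
  have hedges : c2.edges = P1.edges ++ P2.edges := by rw [← hspec, Walk.edges_append]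
  have hsupp : c2.support.tail = P1.support.tail ++ P2.support.tail := by
    conv_lhs => rw [← hspec, Walk.support_append, P1.support_eq_cons, List.cons_append,
      List.tail_cons]
  have hnd : (P1.support.tail ++ P2.support.tail).Nodup := by
    rw [← hsupp]; exact hc2cyc.support_nodup
  obtain ⟨hnd1, hnd2, hdisj12⟩ := List.nodup_append.1 hnd
  have hlen12 : P1.length + P2.length = c2.length := by
    rw [← hspec, Walk.length_append]
  have hlP1 : 2 ≤ P1.length := two_le_walk_length P1 hne_ij hnoGd
  have hlP2 : 2 ≤ P2.length := two_le_walk_length P2 (Ne.symm hne_ij) (fun h => hnoGd h.symm)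
  have hviP2t : vi ∈ P2.support.tail := by
    have h1 : vi ∈ P2.support := P2.end_mem_support
    rw [P2.support_eq_cons] at h1
    rcases List.mem_cons.1 h1 with h1 | h1
    · exact absurd h1 hne_ij
    · exact h1
  have hvjP1t : vj ∈ P1.support.tail := by
    have h1 : vj ∈ P1.support := P1.end_mem_support
    rw [P1.support_eq_cons] at h1
    rcases List.mem_cons.1 h1 with h1 | h1
    · exact absurd h1 (Ne.symm hne_ij)
    · exact h1
  have hP1path : P1.IsPath := by
    rw [Walk.isPath_def, P1.support_eq_cons, List.nodup_cons]
    exact ⟨fun hvi1 => hdisj12 _ hvi1 _ hviP2t rfl, hnd1⟩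
  have hP2path : P2.IsPath := by
    rw [Walk.isPath_def, P2.support_eq_cons, List.nodup_cons]
    exact ⟨fun hvj2' => hdisj12 _ hvjP1t _ hvj2' rfl, hnd2⟩
  have hkey : ∀ x, x ∈ P1.support → x ∈ P2.support → x = vi ∨ x = vj := by
    intro x hx1 hx2
    rw [P1.support_eq_cons] at hx1; rw [P2.support_eq_cons] at hx2
    rcases List.mem_cons.1 hx1 with rfl | hx1
    · exact Or.inl rfl
    rcases List.mem_cons.1 hx2 with rfl | hx2
    · exact Or.inr rfl
    exact absurd rfl (hdisj12 _ hx1 _ hx2)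
  have hedisj : ∀ f, f ∈ P1.edges → f ∉ P2.edges := by
    have hnde : c2.edges.Nodup := hc2cyc.isCircuit.isTrail.edges_nodup
    rw [hedges] at hnde
    exact fun f hf1 hf2 => (List.nodup_append.1 hnde).2.2 f hf1 f hf2 rfl
  have hchordP1 : ∀ x y, x ∈ P1.support → y ∈ P1.support → (G.deleteEdges {s(vi, vj)}).Adj x y →
      s(x, y) ∈ P1.edges := by
    intro x y hx hy hadj
    have hin := hc2.2.2 x y (c2.support_takeUntil_subset hvj2 hx)
      (c2.support_takeUntil_subset hvj2 hy) hadj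
    rw [hedges, List.mem_append] at hin
    rcases hin with hin | hin
    · exact hin
    exfalso
    have hx2 : x ∈ P2.support := P2.fst_mem_support_of_mem_edges hin
    have hy2 : y ∈ P2.support := P2.snd_mem_support_of_mem_edges hin
    have hxyne : x ≠ y := hadj.ne
    have hxy : s(x, y) = s(vi, vj) := by
      rcases hkey x hx hx2 with rfl | rfl <;> rcases hkey y hy hy2 with rfl | rfl
      · exact absurd rfl hxyne
      · rfl
      · exact Sym2.eq_swap
      · exact absurd rfl hxyne
    rw [hxy] at hin
    exact heGd P2 hin
  have hchordP2 : ∀ x y, x ∈ P2.support → y ∈ P2.support → (G.deleteEdges {s(vi, vj)}).Adj x y →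
      s(x, y) ∈ P2.edges := by
    intro x y hx hy hadj
    have hin := hc2.2.2 x y (c2.support_dropUntil_subset hvj2 hx)
      (c2.support_dropUntil_subset hvj2 hy) hadj
    rw [hedges, List.mem_append] at hin
    rcases hin with hin | hin
    swap
    · exact hin
    exfalso
    have hx1 : x ∈ P1.support := P1.fst_mem_support_of_mem_edges hin
    have hy1 : y ∈ P1.support := P1.snd_mem_support_of_mem_edges hin
    have hxyne : x ≠ y := hadj.ne
    have hxy : s(x, y) = s(vi, vj) := by
      rcases hkey x hx1 hx with rfl | rfl <;> rcases hkey y hy1 hy with rfl | rfl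
      · exact absurd rfl hxyne
      · rfl
      · exact Sym2.eq_swap
      · exact absurd rfl hxyne
    rw [hxy] at hin
    exact heGd P1 hin
  have hchordP1r : ∀ x y, x ∈ P1.reverse.support → y ∈ P1.reverse.support → (G.deleteEdges {s(vi, vj)}).Adj x y →
      s(x, y) ∈ P1.reverse.edges := by
    intro x y hx hy hadj
    rw [Walk.support_reverse, List.mem_reverse] at hx hy
    rw [Walk.edges_reverse, List.mem_reverse]
    exact hchordP1 x y hx hy hadj
  rcases (show P1.length = 2 ∨ 3 ≤ P1.length by omega) with hP1l | hP1l <;>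
    rcases (show P2.length = 2 ∨ 3 ≤ P2.length by omega) with hP2l | hP2l
  · -- both paths have length 2 : impossible (chord between the two midpoints)
    exfalso
    obtain ⟨vk, hk1, hk2, hP1e⟩ := walk_length_two P1 hP1l
    obtain ⟨vl, hl1, hl2, hP2e⟩ := walk_length_two P2 hP2l
    have hk1G : G.Adj vi vk := (deleteEdges_adj.1 hk1).1
    have hk2G : G.Adj vk vj := (deleteEdges_adj.1 hk2).1
    have hl1G : G.Adj vj vl := (deleteEdges_adj.1 hl1).1
    have hl2G : G.Adj vl vi := (deleteEdges_adj.1 hl2).1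
    obtain ⟨-, -, hkK⟩ := triangle_in_K huniq hGadj hk1G hk2G.symm
    obtain ⟨-, -, hlK⟩ := triangle_in_K huniq hGadj hl2G.symm hl1G
    have hkvi : vk ≠ vi := hk1G.ne'
    have hkvj : vk ≠ vj := hk2G.ne
    have hlvj : vl ≠ vj := hl1G.ne'
    have hlvi : vl ≠ vi := hl2G.ne
    have hkP1t : vk ∈ P1.support.tail := by
      have hks : vk ∈ P1.support := P1.snd_mem_support_of_mem_edges (t := vi) (by rw [hP1e]; exact List.mem_cons_self)
      rw [P1.support_eq_cons] at hks
      rcases List.mem_cons.1 hks with h' | h'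
      · exact absurd h' hkvi
      · exact h'
    have hlP2t : vl ∈ P2.support.tail := by
      have hls : vl ∈ P2.support := P2.snd_mem_support_of_mem_edges (t := vj) (by rw [hP2e]; exact List.mem_cons_self)
      rw [P2.support_eq_cons] at hls
      rcases List.mem_cons.1 hls with h' | h'
      · exact absurd h' hlvj
      · exact h'
    have hkl : vk ≠ vl := fun hkl' => hdisj12 _ hkP1t _ hlP2t hkl'
    have hadjkl : G.Adj vk vl := hK.1.1 hkK hlK hkl
    have hadjklGd : (G.deleteEdges {s(vi, vj)}).Adj vk vl := by
      rw [deleteEdges_adj]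
      refine ⟨hadjkl, ?_⟩
      simp only [Set.mem_singleton_iff]
      intro hcase
      rcases Sym2.eq_iff.1 hcase with ⟨h1, h2⟩ | ⟨h1, h2⟩
      · exact hkvi h1
      · exact hkvj h1
    have hkc2 : vk ∈ c2.support := c2.support_takeUntil_subset hvj2
      (by rw [P1.support_eq_cons]; exact List.mem_cons_of_mem _ hkP1t)
    have hlc2 : vl ∈ c2.support := c2.support_dropUntil_subset hvj2
      (by rw [P2.support_eq_cons]; exact List.mem_cons_of_mem _ hlP2t)
    have hin := hc2.2.2 vk vl hkc2 hlc2 hadjklGd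
    rw [hedges, hP1e, hP2e] at hin
    simp only [List.mem_append, List.mem_cons, List.not_mem_nil, or_false] at hin
    rcases hin with (h' | h') | (h' | h') <;>
      rcases Sym2.eq_iff.1 h' with ⟨h1, h2⟩ | ⟨h1, h2⟩
    · exact hkvi h1
    · exact hlvi h2
    · exact hlvj h2
    · exact hkvj h1
    · exact hkvj h1
    · exact hkl h1
    · exact hkl h1
    · exact hkvi h1
  · -- P1 has length 2, P2 has length ≥ 3
    obtain ⟨vk, hk1, hk2, hP1e⟩ := walk_length_two P1 hP1l
    have hk1G : G.Adj vi vk := (deleteEdges_adj.1 hk1).1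
    have hk2G : G.Adj vk vj := (deleteEdges_adj.1 hk2).1
    obtain ⟨-, -, hkK⟩ := triangle_in_K huniq hGadj hk1G hk2G.symm
    obtain ⟨C, hChole, hCe⟩ := hole_from_path hGadj P2 hP2path hP2l hchordP2
    have heq : ∀ f, f ∈ C.edges ↔ f ∈ cH.edges := by
      rcases hdisj C cH hChole hHole with heq | hd
      · exact heq
      · exact absurd he (hd _ ((hCe _).2 (Or.inl rfl)))
    refine ⟨vk, hkK, fun f => ?_⟩
    rw [← List.Perm.mem_iff hperm, hedges, List.mem_append, hP1e]
    constructor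
    · rintro (hf | hf)
      · simp only [List.mem_cons, List.not_mem_nil, or_false] at hf
        rcases hf with rfl | rfl
        · exact Or.inr (Or.inl rfl)
        · exact Or.inr (Or.inr Sym2.eq_swap)
      · exact Or.inl ⟨(heq f).1 ((hCe f).2 (Or.inr hf)), fun hfe => heGd P2 (hfe ▸ hf)⟩
    · rintro (⟨hfH, hfne⟩ | rfl | rfl)
      · rcases (hCe f).1 ((heq f).2 hfH) with rfl | hf
        · exact absurd rfl hfne
        · exact Or.inr hf
      · exact Or.inl (by simp)
      · refine Or.inl ?_
        simp only [List.mem_cons, List.not_mem_nil, or_false]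
        exact Or.inr Sym2.eq_swap
  · -- P1 has length ≥ 3, P2 has length 2
    obtain ⟨vl, hl1, hl2, hP2e⟩ := walk_length_two P2 hP2l
    have hl1G : G.Adj vj vl := (deleteEdges_adj.1 hl1).1
    have hl2G : G.Adj vl vi := (deleteEdges_adj.1 hl2).1
    obtain ⟨-, -, hlK⟩ := triangle_in_K huniq hGadj hl2G.symm hl1G
    obtain ⟨C, hChole, hCe⟩ := hole_from_path hGadj P1.reverse hP1path.reverse
      (by rw [Walk.length_reverse]; exact hP1l) hchordP1r
    have heq : ∀ f, f ∈ C.edges ↔ f ∈ cH.edges := by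
      rcases hdisj C cH hChole hHole with heq | hd
      · exact heq
      · exact absurd he (hd _ ((hCe _).2 (Or.inl rfl)))
    refine ⟨vl, hlK, fun f => ?_⟩
    rw [← List.Perm.mem_iff hperm, hedges, List.mem_append, hP2e]
    constructor
    · rintro (hf | hf)
      · refine Or.inl ⟨(heq f).1 ((hCe f).2 (Or.inr ?_)), fun hfe => heGd P1 (hfe ▸ hf)⟩
        rw [Walk.edges_reverse, List.mem_reverse]
        exact hf
      · simp only [List.mem_cons, List.not_mem_nil, or_false] at hf
        rcases hf with rfl | rfl
        · exact Or.inr (Or.inr rfl)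
        · exact Or.inr (Or.inl Sym2.eq_swap)
    · rintro (⟨hfH, hfne⟩ | rfl | rfl)
      · rcases (hCe f).1 ((heq f).2 hfH) with rfl | hf
        · exact absurd rfl hfne
        · refine Or.inl ?_
          rw [Walk.edges_reverse, List.mem_reverse] at hf
          exact hf
      · refine Or.inr ?_
        simp only [List.mem_cons, List.not_mem_nil, or_false]
        exact Or.inr Sym2.eq_swap
      · exact Or.inr (by simp)
  · -- both paths have length ≥ 3 : impossible (two holes through e sharing no edge)
    exfalso
    obtain ⟨C1, hC1hole, hC1e⟩ := hole_from_path hGadj P1.reverse hP1path.reverse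
      (by rw [Walk.length_reverse]; exact hP1l) hchordP1r
    obtain ⟨C2, hC2hole, hC2e⟩ := hole_from_path hGadj P2 hP2path hP2l hchordP2
    have heq1 : ∀ f, f ∈ C1.edges ↔ f ∈ cH.edges := by
      rcases hdisj C1 cH hC1hole hHole with heq | hd
      · exact heq
      · exact absurd he (hd _ ((hC1e _).2 (Or.inl rfl)))
    have heq2 : ∀ f, f ∈ C2.edges ↔ f ∈ cH.edges := by
      rcases hdisj C2 cH hC2hole hHole with heq | hd
      · exact heq
      · exact absurd he (hd _ ((hC2e _).2 (Or.inl rfl)))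
    obtain ⟨f, hf⟩ := List.exists_mem_of_length_pos (l := P1.edges)
      (by rw [Walk.length_edges]; omega)
    have hf1 : f ∈ C1.edges := (hC1e f).2 (Or.inr (by
      rw [Walk.edges_reverse, List.mem_reverse]; exact hf))
    have hf2 : f ∈ C2.edges := (heq2 f).2 ((heq1 f).1 hf1)
    rcases (hC2e f).1 hf2 with rfl | hf2'
    · exact heGd P1 hf
    · exact hedisj f hf hf2'
end

section
/- Let D_1 and D_2 be acyclic digraphs with disjoint vertex sets. Suppose the competition graph C(D_1) has at least p isolated vertices, forming a set I_p, and D_2 has at least p vertices with no in-neighbors. Then there exists an acyclic digraph D whose competition graph C(D) equals the disjoint union C(D_1) ∪ C(D_2) with the p isolated vertices of I_p removed. -/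
open SimpleGraph

/-- **Lemma 5.** Given vertex-disjoint acyclic digraphs `D₁`, `D₂` such that
`C(D₁)` has `p` isolated vertices forming a set `I` and `D₂` has `p` vertices with no
in-neighbors, there is an acyclic digraph `D` with
`C(D) = C(D₁) ∪ C(D₂) - I`. -/
theorem pasting_acyclic_digraphs
    {V₁ V₂ : Type*} [Fintype V₁] [Fintype V₂]
    (D₁ : V₁ → V₁ → Prop) (D₂ : V₂ → V₂ → Prop)
    (hD₁ : DigraphAcyclic D₁) (hD₂ : DigraphAcyclic D₂)
    (p : ℕ) (I : Finset V₁) (hI : I.card = p)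
    (hIiso : ∀ i ∈ I, ∀ y, ¬ (competitionGraph D₁).Adj i y)
    (J : Finset V₂) (hJ : J.card = p) (hJin : ∀ u ∈ J, ∀ w, ¬ D₂ w u) :
    ∃ D : (↥{x : V₁ | x ∉ I} ⊕ V₂) → (↥{x : V₁ | x ∉ I} ⊕ V₂) → Prop,
      DigraphAcyclic D ∧
      competitionGraph D =
        ((competitionGraph D₁).induce {x : V₁ | x ∉ I}) ⊕g (competitionGraph D₂) := by
  classical
  have hcard : I.card = J.card := hI.trans hJ.symm
  let e : (I : Finset V₁) ≃ (J : Finset V₂) := Finset.equivOfCardEq hcard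
  set S : Set V₁ := {x : V₁ | x ∉ I} with hS
  let D : (↥S ⊕ V₂) → (↥S ⊕ V₂) → Prop := fun a b =>
    match a, b with
    | Sum.inl x, Sum.inl y => D₁ x y
    | Sum.inl x, Sum.inr u => ∃ i : I, (e i : V₂) = u ∧ D₁ x i
    | Sum.inr _, Sum.inl _ => False
    | Sum.inr u, Sum.inr w => D₂ u w
  refine ⟨D, ?_, ?_⟩
  · -- acyclicity
    have h1 : ∀ (u : V₂) (b), Relation.TransGen D (Sum.inr u) b →
        ∃ w, b = Sum.inr w ∧ Relation.TransGen D₂ u w := by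
      intro u b h
      induction h with
      | single h =>
        rename_i c
        cases c with
        | inl z => exact (h : False).elim
        | inr w => exact ⟨w, rfl, Relation.TransGen.single h⟩
      | tail _ h ih =>
        obtain ⟨w, rfl, hw⟩ := ih
        rename_i c _
        cases c with
        | inl z => exact (h : False).elim
        | inr w' => exact ⟨w', rfl, hw.tail h⟩
    have h2 : ∀ (x : ↥S) (b), Relation.TransGen D (Sum.inl x) b →
        ∀ y : ↥S, b = Sum.inl y → Relation.TransGen D₁ (x : V₁) (y : V₁) := by
      intro x b h
      induction h with
      | single h =>
        intro y hy
        subst hy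
        exact Relation.TransGen.single h
      | tail _ h ih =>
        intro y hy
        subst hy
        rename_i c _
        cases c with
        | inl z => exact (ih z rfl).tail h
        | inr w => exact (h : False).elim
    rintro (x | u) h
    · exact hD₁ x (h2 x _ h x rfl)
    · obtain ⟨w, hw, hcyc⟩ := h1 u _ h
      obtain rfl := Sum.inr.inj hw
      exact hD₂ u hcyc
  · -- competition graph
    ext a b
    rcases a with x | u <;> rcases b with y | w
    · -- inl inl
      show (Sum.inl x ≠ Sum.inl y ∧ ∃ v, D (Sum.inl x) v ∧ D (Sum.inl y) v) ↔ _
      simp only [SimpleGraph.sum_adj, SimpleGraph.induce, SimpleGraph.comap_adj,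
        Function.Embedding.coe_subtype]
      show _ ↔ ((x : V₁) ≠ (y : V₁) ∧ ∃ v, D₁ x v ∧ D₁ y v)
      constructor
      · rintro ⟨hne, (v | v), hxv, hyv⟩
        · exact ⟨fun h => hne (by simp [Subtype.ext h]), v, hxv, hyv⟩
        · obtain ⟨i, hi, hxi⟩ := hxv
          obtain ⟨i', hi', hyi⟩ := hyv
          have hii : i = i' := e.injective (Subtype.ext (hi.trans hi'.symm))
          subst hii
          exact ⟨fun h => hne (by simp [Subtype.ext h]), i, hxi, hyi⟩
      · rintro ⟨hne, v, hxv, hyv⟩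
        refine ⟨fun h => hne (congrArg Subtype.val (Sum.inl.inj h)), ?_⟩
        by_cases hv : v ∈ I
        · exact ⟨Sum.inr (e ⟨v, hv⟩), ⟨⟨v, hv⟩, rfl, hxv⟩, ⟨⟨v, hv⟩, rfl, hyv⟩⟩
        · exact ⟨Sum.inl ⟨v, hv⟩, hxv, hyv⟩
    · -- inl inr
      show (Sum.inl x ≠ Sum.inr w ∧ ∃ v, D (Sum.inl x) v ∧ D (Sum.inr w) v) ↔ _
      simp only [SimpleGraph.sum_adj]
      constructor
      · rintro ⟨-, (v | v), hxv, hwv⟩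
        · exact (hwv : False).elim
        · obtain ⟨i, hi, -⟩ := hxv
          exact (hJin v (hi ▸ (e i).2) w hwv).elim
      · exact fun h => h.elim
    · -- inr inl
      show (Sum.inr u ≠ Sum.inl y ∧ ∃ v, D (Sum.inr u) v ∧ D (Sum.inl y) v) ↔ _
      simp only [SimpleGraph.sum_adj]
      constructor
      · rintro ⟨-, (v | v), huv, hyv⟩
        · exact (huv : False).elim
        · obtain ⟨i, hi, -⟩ := hyv
          exact (hJin v (hi ▸ (e i).2) u huv).elim
      · exact fun h => h.elim
    · -- inr inr
      show (Sum.inr u ≠ Sum.inr w ∧ ∃ v, D (Sum.inr u) v ∧ D (Sum.inr w) v) ↔ _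
      simp only [SimpleGraph.sum_adj]
      show _ ↔ (u ≠ w ∧ ∃ v, D₂ u v ∧ D₂ w v)
      constructor
      · rintro ⟨hne, (v | v), huv, hwv⟩
        · exact (huv : False).elim
        · exact ⟨fun h => hne (congrArg Sum.inr h), v, huv, hwv⟩
      · rintro ⟨hne, v, huv, hwv⟩
        exact ⟨fun h => hne (Sum.inr.inj h), Sum.inr v, huv, hwv⟩
end

section
/- Let G be a connected triangle-free graph having exactly one hole H. Then for every edge e of H, the graph G − e contains no cycle (i.e., G − e is a forest). -/
open SimpleGraph

private lemma aux_len4 {V : Type*} {G : SimpleGraph V} (htf : G.CliqueFree 3) {v : V}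
    {c : G.Walk v v} (hc : c.IsCycle) : 4 ≤ c.length := by
  classical
  have h3 := hc.three_le_length
  by_contra hlt
  have hlen : c.length = 3 := by omega
  set a := c.getVert 1 with ha
  set b := c.getVert 2 with hb
  have h01 : G.Adj v a := by
    have := c.adj_getVert_succ (i := 0) (by omega)
    simpa [Walk.getVert_zero] using this
  have h12 : G.Adj a b := c.adj_getVert_succ (i := 1) (by omega)
  have h23 : G.Adj b v := by
    have := c.adj_getVert_succ (i := 2) (by omega)
    have h3' : c.getVert 3 = v := by
      rw [← hlen]; exact c.getVert_length
    rwa [h3'] at this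
  exact htf {v, a, b} (is3Clique_triple_iff.mpr ⟨h01, h23.symm, h12⟩)



private lemma aux_mem_tail {V : Type*} {G : SimpleGraph V} {v : V} {c : G.Walk v v}
    (hnil : ¬c.Nil) {w : V} (hw : w ∈ c.support) : w ∈ c.support.tail := by
  cases c with
  | nil => simp at hnil
  | cons h q =>
    simp only [Walk.support_cons, List.tail_cons]
    rcases List.mem_cons.mp (by simpa using hw) with rfl | hmem
    · exact q.end_mem_support
    · exact hmem

private lemma aux_edge_of_length_one {V : Type*} {G : SimpleGraph V} {x y : V}
    {p : G.Walk x y} (h : p.length = 1) : s(x, y) ∈ p.edges := by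
  cases p with
  | nil => simp at h
  | cons hadj q =>
    have h0 : q.length = 0 := by simpa using h
    have := Walk.eq_of_length_eq_zero h0
    subst this
    simp

private lemma aux_split {V : Type*} {G : SimpleGraph V} {v x y : V} {c : G.Walk v v}
    (hc : c.IsCycle) (hx : x ∈ c.support) (hy : y ∈ c.support) (hadj : G.Adj x y)
    (hne : s(x, y) ∉ c.edges) :
    ∃ (p1 : G.Walk x y) (p2 : G.Walk y x),
      p1.IsPath ∧ p2.IsPath ∧ 2 ≤ p1.length ∧ 2 ≤ p2.length ∧
      p1.length + p2.length = c.length ∧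
      (∀ f ∈ p1.edges, f ∈ c.edges) ∧ (∀ f ∈ p2.edges, f ∈ c.edges) ∧
      (∀ f ∈ p1.edges, f ∉ p2.edges) ∧
      (∀ f ∈ c.edges, f ∈ p1.edges ∨ f ∈ p2.edges) ∧
      (∀ w ∈ p1.support, w ∈ c.support) ∧ (∀ w ∈ p2.support, w ∈ c.support) ∧
      (∀ w, w ∈ p1.support → w ∈ p2.support → w = x ∨ w = y) := by
  classical
  have hxy : x ≠ y := hadj.ne
  have hlc : 3 ≤ c.length := hc.three_le_length
  have hnil : ¬c.Nil := by rw [Walk.nil_iff_length_eq]; omega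
  set c1 := c.rotate x hx with hc1def
  have hc1 : c1.IsCycle := hc.rotate hx
  have hrt : c1.support.tail ~r c.support.tail := c.support_rotate x hx
  have hre : c1.edges ~r c.edges := c.rotate_edges x hx
  have hlen1 : c1.length = c.length := by
    have h1 := (c.rotate_darts x hx).perm.length_eq
    rwa [Walk.length_darts, Walk.length_darts] at h1
  have hnil1 : ¬c1.Nil := by rw [Walk.nil_iff_length_eq]; omega
  have hy1 : y ∈ c1.support := by
    have h1 : y ∈ c.support.tail := aux_mem_tail hnil hy
    have h2 : y ∈ c1.support.tail := hrt.mem_iff.mpr h1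
    exact List.mem_of_mem_tail h2
  set p1 := c1.takeUntil y hy1 with hp1def
  set p2 := c1.dropUntil y hy1 with hp2def
  have hspec : p1.append p2 = c1 := c1.take_spec hy1
  have hed : c1.edges = p1.edges ++ p2.edges := by rw [← hspec, Walk.edges_append]
  have hcmem : ∀ f, f ∈ c1.edges ↔ f ∈ c.edges := fun f => hre.mem_iff
  have hc1sup : ∀ w ∈ c1.support, w ∈ c.support := by
    intro w hw
    have h1 : w ∈ c1.support.tail := aux_mem_tail hnil1 hw
    exact List.mem_of_mem_tail (hrt.mem_iff.mp h1)
  -- nodup facts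
  have hnd : (p1.edges ++ p2.edges).Nodup := hed ▸ hc1.1.1.edges_nodup
  have htail : c1.support.tail = p1.support.tail ++ p2.support.tail := by
    conv_lhs => rw [← hspec]
    rw [Walk.support_append, p1.support_eq_cons]
    simp
  have hst : (p1.support.tail ++ p2.support.tail).Nodup := by
    rw [← htail]; exact hc1.2
  have hp1nil : ¬p1.Nil := fun h => hxy (Walk.Nil.eq h)
  have hp2nil : ¬p2.Nil := fun h => hxy (Walk.Nil.eq h).symm
  have hyp1 : y ∈ p1.support.tail := Walk.end_mem_tail_support_of_ne hxy p1
  have hxp2 : x ∈ p2.support.tail := Walk.end_mem_tail_support_of_ne hxy.symm p2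
  have hdisj : List.Disjoint p1.support.tail p2.support.tail :=
    List.disjoint_of_nodup_append hst
  have hp1path : p1.IsPath := by
    rw [Walk.isPath_def, p1.support_eq_cons]
    exact List.nodup_cons.mpr ⟨fun h => hdisj h hxp2, hst.of_append_left⟩
  have hp2path : p2.IsPath := by
    rw [Walk.isPath_def, p2.support_eq_cons]
    exact List.nodup_cons.mpr ⟨fun h => hdisj hyp1 h, hst.of_append_right⟩
  have hsum : p1.length + p2.length = c.length := by
    rw [← hlen1, ← hspec, Walk.length_append]
  have hp1e : ∀ f ∈ p1.edges, f ∈ c.edges := fun f hf =>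
    (hcmem f).mp (c1.edges_takeUntil_subset hy1 hf)
  have hp2e : ∀ f ∈ p2.edges, f ∈ c.edges := fun f hf =>
    (hcmem f).mp (c1.edges_dropUntil_subset hy1 hf)
  have hp1len : 2 ≤ p1.length := by
    rcases Nat.lt_or_ge p1.length 2 with h | h
    · exfalso
      have h1 : p1.length ≠ 0 := fun h0 => hp1nil (Walk.nil_iff_length_eq.mpr h0)
      have h2 : p1.length = 1 := by omega
      exact hne (hp1e _ (aux_edge_of_length_one h2))
    · exact h
  have hp2len : 2 ≤ p2.length := by
    rcases Nat.lt_or_ge p2.length 2 with h | h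
    · exfalso
      have h1 : p2.length ≠ 0 := fun h0 => hp2nil (Walk.nil_iff_length_eq.mpr h0)
      have h2 : p2.length = 1 := by omega
      have := hp2e _ (aux_edge_of_length_one h2)
      rw [Sym2.eq_swap] at this
      exact hne this
    · exact h
  refine ⟨p1, p2, hp1path, hp2path, hp1len, hp2len, hsum, hp1e, hp2e, ?_, ?_, ?_, ?_, ?_⟩
  · intro f hf1 hf2
    exact (List.disjoint_of_nodup_append hnd) hf1 hf2
  · intro f hf
    have : f ∈ p1.edges ++ p2.edges := hed ▸ (hcmem f).mpr hf
    exact List.mem_append.mp this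
  · intro w hw
    exact hc1sup w (c1.support_takeUntil_subset hy1 hw)
  · intro w hw
    exact hc1sup w (c1.support_dropUntil_subset hy1 hw)
  · intro w hw1 hw2
    rw [p1.support_eq_cons] at hw1
    rw [p2.support_eq_cons] at hw2
    rcases List.mem_cons.mp hw1 with rfl | hw1'
    · exact Or.inl rfl
    · rcases List.mem_cons.mp hw2 with rfl | hw2'
      · exact Or.inr rfl
      · exact absurd (hdisj hw1' hw2') (fun h => h)

/-- If `G` is a connected triangle-free graph with exactly one hole `H`,
then deleting any edge of `H` leaves a forest. -/
theorem deleteEdge_of_hole_isAcyclic_of_unique_hole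
    {V : Type*} [Fintype V] (G : SimpleGraph V) (hconn : G.Connected)
    (htf : G.CliqueFree 3)
    {u : V} (cH : G.Walk u u) (hHole : G.IsHole cH)
    (hh : G.holeEdgeSets.ncard = 1)
    (e : Sym2 V) (he : e ∈ cH.edges) :
    (G.deleteEdges {e}).IsAcyclic := by
  
  classical
  revert he
  induction e using Sym2.ind with
  | _ a b =>
  intro he
  have heG : s(a, b) ∈ G.edgeSet := cH.edges_subset_edgeSet he
  have hab : G.Adj a b := heG
  set G' := G.deleteEdges {s(a, b)} with hG'
  intro v0 c0 hc0
  set S : Set ℕ := {n | ∃ (w : V) (c : G'.Walk w w), c.IsCycle ∧ c.length = n} with hSdef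
  have hS : S.Nonempty := ⟨c0.length, v0, c0, hc0, rfl⟩
  obtain ⟨w, c, hc, hlen⟩ := Nat.sInf_mem hS
  have hmin : ∀ (w' : V) (c' : G'.Walk w' w'), c'.IsCycle → sInf S ≤ c'.length :=
    fun w' c' h => Nat.sInf_le ⟨w', c', h, rfl⟩
  have heG' : s(a, b) ∉ G'.edgeSet := by
    rw [hG', edgeSet_deleteEdges]; simp
  have henotc : s(a, b) ∉ c.edges := fun h => heG' (c.edges_subset_edgeSet h)
  have hchordfree : ∀ x y, x ∈ c.support → y ∈ c.support → G'.Adj x y → s(x, y) ∈ c.edges := by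
    intro x y hxs hys hadj
    by_contra hnexy
    obtain ⟨p1, p2, hp1, hp2, hl1, hl2, hsum, _, hp2e, _, _, _, _, _⟩ :=
      aux_split hc hxs hys hadj hnexy
    have hecyc : (Walk.cons hadj p2).IsCycle :=
      Path.cons_isCycle ⟨p2, hp2⟩ hadj (fun h => hnexy (hp2e _ h))
    have := hmin _ _ hecyc
    rw [Walk.length_cons] at this
    omega
  have htrans : ∀ f ∈ c.edges, f ∈ G.edgeSet := fun f hf =>
    edgeSet_mono (deleteEdges_le _) (c.edges_subset_edgeSet hf)
  by_cases hcase : a ∈ c.support ∧ b ∈ c.support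
  · -- case A: the deleted edge is a chord of `c`
    obtain ⟨has, hbs⟩ := hcase
    set cG := c.transfer G htrans with hcGdef
    have hcG : cG.IsCycle := hc.transfer htrans
    have hsupG : cG.support = c.support := c.support_transfer htrans
    have hedG : cG.edges = c.edges := c.edges_transfer htrans
    have hneG : s(a, b) ∉ cG.edges := by rw [hedG]; exact henotc
    obtain ⟨p1, p2, hp1, hp2, hl1, hl2, hsum, hp1e, hp2e, hdisj, hcov, hp1s, hp2s, hinter⟩ :=
      aux_split hcG (by rw [hsupG]; exact has) (by rw [hsupG]; exact hbs) hab hneG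
    rw [hedG] at hp1e hp2e hcov
    rw [hsupG] at hp1s hp2s
    have hd1 : (Walk.cons hab p2).IsCycle :=
      Path.cons_isCycle ⟨p2, hp2⟩ hab (fun h => henotc (hp2e _ h))
    have hd2 : (Walk.cons hab.symm p1).IsCycle := by
      apply Path.cons_isCycle ⟨p1, hp1⟩ hab.symm
      intro h; rw [Sym2.eq_swap] at h; exact henotc (hp1e _ h)
    have hgen : ∀ {x y : V}, x ∈ c.support → y ∈ c.support → G.Adj x y →
        s(x, y) = s(a, b) ∨ s(x, y) ∈ c.edges := by
      intro x y hxs hys hxy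
      by_cases hq : s(x, y) = s(a, b)
      · exact Or.inl hq
      · refine Or.inr (hchordfree x y hxs hys ?_)
        rw [hG', deleteEdges_adj]
        exact ⟨hxy, by simpa using hq⟩
    have hinter2 : ∀ {x y : V}, x ≠ y → x ∈ p1.support → x ∈ p2.support →
        y ∈ p1.support → y ∈ p2.support → s(x, y) = s(a, b) := by
      intro x y hnexy hx1 hx2 hy1 hy2
      rcases hinter x hx1 hx2 with rfl | rfl
      · rcases hinter y hy1 hy2 with rfl | rfl
        · exact absurd rfl hnexy
        · rfl
      · rcases hinter y hy1 hy2 with rfl | rfl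
        · exact Sym2.eq_swap
        · exact absurd rfl hnexy
    have hhole1 : G.IsHole (Walk.cons hab p2) := by
      refine ⟨hd1, aux_len4 htf hd1, ?_⟩
      intro x y hxs hys hxy
      rw [Walk.support_cons] at hxs hys
      rw [Walk.edges_cons]
      have hx2 : x ∈ p2.support := by
        rcases List.mem_cons.mp hxs with rfl | h
        · exact p2.end_mem_support
        · exact h
      have hy2 : y ∈ p2.support := by
        rcases List.mem_cons.mp hys with rfl | h
        · exact p2.end_mem_support
        · exact h
      rcases hgen (hp2s _ hx2) (hp2s _ hy2) hxy with h | h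
      · rw [h]; exact List.mem_cons_self
      · rcases hcov _ h with h1 | h2
        · exfalso
          have hx1 : x ∈ p1.support := Walk.fst_mem_support_of_mem_edges p1 h1
          have hy1 : y ∈ p1.support := Walk.snd_mem_support_of_mem_edges p1 h1
          have hxyab := hinter2 hxy.ne hx1 hx2 hy1 hy2
          exact henotc (hxyab ▸ h)
        · exact List.mem_cons_of_mem _ h2
    have hhole2 : G.IsHole (Walk.cons hab.symm p1) := by
      refine ⟨hd2, aux_len4 htf hd2, ?_⟩
      intro x y hxs hys hxy
      rw [Walk.support_cons] at hxs hys
      rw [Walk.edges_cons]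
      have hx1 : x ∈ p1.support := by
        rcases List.mem_cons.mp hxs with rfl | h
        · exact p1.end_mem_support
        · exact h
      have hy1 : y ∈ p1.support := by
        rcases List.mem_cons.mp hys with rfl | h
        · exact p1.end_mem_support
        · exact h
      rcases hgen (hp1s _ hx1) (hp1s _ hy1) hxy with h | h
      · rw [h, Sym2.eq_swap]; exact List.mem_cons_self
      · rcases hcov _ h with h1 | h2
        · exact List.mem_cons_of_mem _ h1
        · exfalso
          have hx2 : x ∈ p2.support := Walk.fst_mem_support_of_mem_edges p2 h2
          have hy2 : y ∈ p2.support := Walk.snd_mem_support_of_mem_edges p2 h2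
          have hxyab := hinter2 hxy.ne hx1 hx2 hy1 hy2
          exact henotc (hxyab ▸ h)
    obtain ⟨S0, hS0⟩ := Set.ncard_eq_one.mp hh
    have h1 : {f | f ∈ (Walk.cons hab p2).edges} ∈ G.holeEdgeSets :=
      ⟨a, Walk.cons hab p2, hhole1, rfl⟩
    have h2 : {f | f ∈ (Walk.cons hab.symm p1).edges} ∈ G.holeEdgeSets :=
      ⟨b, Walk.cons hab.symm p1, hhole2, rfl⟩
    rw [hS0, Set.mem_singleton_iff] at h1 h2
    have heq := h1.trans h2.symm
    have hp1ne : p1.edges ≠ [] := by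
      intro h
      have hle := p1.length_edges
      rw [h] at hle
      simp only [List.length_nil] at hle
      omega
    obtain ⟨f, hf⟩ := List.exists_mem_of_ne_nil _ hp1ne
    have hfd2 : f ∈ {g | g ∈ (Walk.cons hab.symm p1).edges} := by
      rw [Set.mem_setOf_eq, Walk.edges_cons]
      exact List.mem_cons_of_mem _ hf
    rw [← heq, Set.mem_setOf_eq, Walk.edges_cons] at hfd2
    rcases List.mem_cons.mp hfd2 with h | h
    · exact henotc (h ▸ hp1e _ hf)
    · exact hdisj _ hf h
  · -- case B: `c` is itself a hole of `G` avoiding the deleted edge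
    set cG := c.transfer G htrans with hcGdef
    have hcG : cG.IsCycle := hc.transfer htrans
    have hsupG : cG.support = c.support := c.support_transfer htrans
    have hedG : cG.edges = c.edges := c.edges_transfer htrans
    have hhole : G.IsHole cG := by
      refine ⟨hcG, aux_len4 htf hcG, ?_⟩
      intro x y hxs hys hxy
      rw [hsupG] at hxs hys
      rw [hedG]
      by_cases hq : s(x, y) = s(a, b)
      · exfalso
        rcases Sym2.eq_iff.mp hq with ⟨rfl, rfl⟩ | ⟨rfl, rfl⟩
        · exact hcase ⟨hxs, hys⟩
        · exact hcase ⟨hys, hxs⟩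
      · refine hchordfree x y hxs hys ?_
        rw [hG', deleteEdges_adj]
        exact ⟨hxy, by simpa using hq⟩
    obtain ⟨S0, hS0⟩ := Set.ncard_eq_one.mp hh
    have h1 : {f | f ∈ cG.edges} ∈ G.holeEdgeSets := ⟨w, cG, hhole, rfl⟩
    have h2 : {f | f ∈ cH.edges} ∈ G.holeEdgeSets := ⟨u, cH, hHole, rfl⟩
    rw [hS0, Set.mem_singleton_iff] at h1 h2
    have hmem : s(a, b) ∈ {f | f ∈ cG.edges} := by
      rw [h1, ← h2]; exact he
    rw [Set.mem_setOf_eq, hedG] at hmem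
    exact henotc hmem
end
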